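/- arXiv:1509.07207 — 2 statements merged into one kernel-verified Lean document; each statement's English description precedes it below -/
import Mathlib

section
/- Let G be a parity game and let ρ̄ be the least game parity progress measure of G with respect to the pointwise order ⊑ (i.e., ρ̄ is a game parity progress measure and ρ̄ ⊑ ρ for every game parity progress measure ρ). Then for every vertex v ∈ V: ρ̄(v) ≠ ⊤ if and only if player Even has a winning strategy from v (i.e., v ∈ W_Even(G)). -/
open Classical

noncomputable section

instance (priority := 5000) (n : ℕ) : WellFoundedLT (Fin n) :=
  Finite.to_wellFoundedLT

noncomputable instance (priority := 5000) (n : ℕ) : LinearOrder (Lex (Fin n → ℕ)) :=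
  inferInstance

/-- Least element of a set, if it exists; otherwise a default value. -/
def sLeast {α : Type*} [Preorder α] (s : Set α) (dflt : α) : α :=
  if h : ∃ a, IsLeast s a then h.choose else dflt

/-- Greatest element of a set, if it exists; otherwise a default value. -/
def sGreatest {α : Type*} [Preorder α] (s : Set α) (dflt : α) : α :=
  if h : ∃ a, IsGreatest s a then h.choose else dflt

/-- A parity game: a finite set of vertices with a total edge relation, a priority
function and an ownership function (`ownerEven v = true` iff `v ∈ V_Even`). -/
structure ParityGame (V : Type*) [Fintype V] where
  E : V → V → Prop
  total : ∀ v, ∃ w, E v w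
  prio : V → ℕ
  ownerEven : V → Bool

namespace ParityGame

variable {V : Type*} [Fintype V] [DecidableEq V] (G : ParityGame V)

/-- `d` is one plus the maximal priority occurring in the game. -/
def d : ℕ := (Finset.univ.sup G.prio) + 1

/-- The domain of (extended) measures: `⊤` together with `d`-tuples of naturals,
ordered lexicographically with `⊤` maximal.  This is `M_Even_ext` (together with
tuples that are nonzero at even positions, which are never used). -/
abbrev Meas : Type _ := WithTop (Lex (Fin G.d → ℕ))

/-- `nP i` is the number of vertices of priority `i`. -/
def nP (i : ℕ) : ℕ := (Finset.univ.filter (fun v => G.prio v = i)).card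

/-- Membership in `M_Even`: `⊤`, or a `d`-tuple which is `0` at even positions and
bounded by `nP i` at odd positions `i`. -/
def inMEven (m : G.Meas) : Prop :=
  m = ⊤ ∨ ∃ f : Fin G.d → ℕ, m = ((toLex f : Lex (Fin G.d → ℕ)) : G.Meas) ∧
    ∀ i : Fin G.d, (Even (i : ℕ) → f i = 0) ∧ (¬ Even (i : ℕ) → f i ≤ G.nP (i : ℕ))

/-- Membership in `M_Even_ext`: `⊤`, or a `d`-tuple which is `0` at even positions. -/
def inMEvenExt (m : G.Meas) : Prop :=
  m = ⊤ ∨ ∃ f : Fin G.d → ℕ, m = ((toLex f : Lex (Fin G.d → ℕ)) : G.Meas) ∧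
    ∀ i : Fin G.d, Even (i : ℕ) → f i = 0

/-- Truncation of a measure to components `0, …, k` (other components set to `0`);
`⊤` is mapped to `⊤`. -/
def trunc (k : ℕ) (m : G.Meas) : G.Meas :=
  WithTop.map (fun f : Lex (Fin G.d → ℕ) => toLex (fun j : Fin G.d => if (j : ℕ) ≤ k then ofLex f j else 0)) m

/-- `a ≥_k b` : comparison of measures on components `0, …, k` only. -/
def geAt (k : ℕ) (a b : G.Meas) : Prop := G.trunc k b ≤ G.trunc k a

/-- `a >_k b` : strict comparison of measures on components `0, …, k` only. -/
def gtAt (k : ℕ) (a b : G.Meas) : Prop := G.trunc k b < G.trunc k a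

/-- The defining condition of `Prog(ρ,v,w)`. -/
def progCond (ρ : V → G.Meas) (v w : V) (m : G.Meas) : Prop :=
  if Even (G.prio v) then G.geAt (G.prio v) m (ρ w)
  else (G.gtAt (G.prio v) m (ρ w) ∨ (m = ⊤ ∧ ρ w = ⊤))

/-- `Prog(ρ,v,w)`: the least element of `M_Even` satisfying `progCond`. -/
def Prog (ρ : V → G.Meas) (v w : V) : G.Meas :=
  if h : ∃ m, IsLeast {m | G.inMEven m ∧ G.progCond ρ v w m} m then h.choose else ⊤

/-- `ρ` takes values in `M_Even`. -/
def IsMeasure (ρ : V → G.Meas) : Prop := ∀ v, G.inMEven (ρ v)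

/-- Game parity progress measure. -/
def IsGPM (ρ : V → G.Meas) : Prop :=
  G.IsMeasure ρ ∧ ∀ v,
    (G.ownerEven v = true → ∃ w, G.E v w ∧ G.geAt (G.prio v) (ρ v) (G.Prog ρ v w)) ∧
    (G.ownerEven v = false → ∀ w, G.E v w → G.geAt (G.prio v) (ρ v) (G.Prog ρ v w))

/-- A play: an infinite `E`-path. -/
def IsPlay (π : ℕ → V) : Prop := ∀ n, G.E (π n) (π (n + 1))

/-- Priority `p` occurs infinitely often on `π`. -/
def InfOft (π : ℕ → V) (p : ℕ) : Prop := ∀ N, ∃ n, N ≤ n ∧ G.prio (π n) = p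

/-- A play is won by Even iff the least priority occurring infinitely often is even. -/
def WonByEven (π : ℕ → V) : Prop := Even (sInf {p | G.InfOft π p})

/-- Won by player `i` (`true` = Even, `false` = Odd). -/
def WonBy (i : Bool) (π : ℕ → V) : Prop :=
  if i then G.WonByEven π else ¬ G.WonByEven π

/-- The history of a play before time `n`. -/
def hist (π : ℕ → V) (n : ℕ) : List V := List.ofFn (fun k : Fin n => π (k : ℕ))

/-- A (history-dependent) strategy for player `i` is valid if it always moves along edges
from vertices of player `i`. -/
def ValidStrat (i : Bool) (σ : List V → V → V) : Prop :=
  ∀ h v, G.ownerEven v = i → G.E v (σ h v)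

/-- Consistency of a play with a history-dependent strategy of player `i`. -/
def ConsH (i : Bool) (σ : List V → V → V) (π : ℕ → V) : Prop :=
  ∀ n, G.ownerEven (π n) = i → π (n + 1) = σ (hist π n) (π n)

/-- Consistency of a play with a positional strategy of player `i`. -/
def ConsP (i : Bool) (σ : V → V) (π : ℕ → V) : Prop :=
  ∀ n, G.ownerEven (π n) = i → π (n + 1) = σ (π n)

/-- Winning region of player `i`: vertices from which `i` has a winning strategy. -/
def WinRegion (i : Bool) : Set V :=
  {v | ∃ σ : List V → V → V, G.ValidStrat i σ ∧
    ∀ π, G.IsPlay π → π 0 = v → G.ConsH i σ π → G.WonBy i π}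

/-- The `i`-attractor into `U`. -/
def Attr (i : Bool) (U : Set V) : Set V :=
  ⋂₀ {A | U ⊆ A ∧
    (∀ v, G.ownerEven v = i → (∃ w, G.E v w ∧ w ∈ A) → v ∈ A) ∧
    (∀ v, G.ownerEven v ≠ i → (∀ w, G.E v w → w ∈ A) → v ∈ A)}

/-- The guarded attractor `Attr^{≥k}_{Odd,W}(U)`. -/
def GAttr (k : ℕ) (W U : Set V) : Set V :=
  ⋂₀ {A | U ⊆ A ∧ A ⊆ W ∩ {v | k ≤ G.prio v} ∧
    ∀ u ∈ W ∩ {v | k ≤ G.prio v},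
      (G.ownerEven u = false → (∃ w, G.E u w ∧ w ∈ A) → u ∈ A) ∧
      (G.ownerEven u = true → (∀ w, G.E u w → w ∈ W → w ∈ A) → u ∈ A)}

/-- The lifting operator `Lift(ρ, v)`. -/
def Lift (ρ : V → G.Meas) (v : V) : V → G.Meas :=
  Function.update ρ v
    (if G.ownerEven v = true
      then max (ρ v) (sLeast {m | ∃ w, G.E v w ∧ m = G.Prog ρ v w} ⊤)
      else max (ρ v) (sGreatest {m | ∃ w, G.E v w ∧ m = G.Prog ρ v w} ⊤))

/-- The all-zero measure. -/
def zeroMeas : G.Meas := ((toLex (fun _ : Fin G.d => 0) : Lex (Fin G.d → ℕ)) : G.Meas)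

/-- A lifting sequence `ρ₀, …, ρ_N` in which `v` is the first vertex lifted to `⊤`. -/
def FirstTop (ρs : ℕ → V → G.Meas) (N : ℕ) (v : V) : Prop :=
  (∀ u, ρs 0 u = G.zeroMeas) ∧
  (∀ j < N, ∃ u, ρs (j + 1) = G.Lift (ρs j) u ∧
    (∀ w, ρs j w ≤ ρs (j + 1) w) ∧ ρs j ≠ ρs (j + 1)) ∧
  (∀ j < N, ∀ w, ρs j w ≠ ⊤) ∧
  ρs N v = ⊤

/-- The prefix `π 0 … π l` of a play is an `i`-dominated stretch. -/
def domStretchPrefix (π : ℕ → V) (i l : ℕ) : Prop :=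
  (∀ m ≤ l, i ≤ G.prio (π m)) ∧ (∃ m ≤ l, G.prio (π m) = i)

/-- The degree of the prefix `π 0 … π l` with respect to priority `i`: the number of
its vertices of priority `i`. -/
def degree (π : ℕ → V) (i l : ℕ) : ℕ :=
  ((Finset.range (l + 1)).filter (fun m => G.prio (π m) = i)).card

/-- The value `θ(π)` of a play: `⊤` if `π` is won by Odd, and otherwise the tuple whose
component at each odd position `i` is the degree of the maximal `i`-dominated stretch
that is a prefix of `π` (and `0` if there is no such prefix). -/
def theta (π : ℕ → V) : G.Meas :=
  if G.WonByEven π then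
    ((toLex (fun j : Fin G.d =>
      if Even (j : ℕ) then 0
      else sSup {c | ∃ l, G.domStretchPrefix π (j : ℕ) l ∧ c = G.degree π (j : ℕ) l}) :
        Lex (Fin G.d → ℕ)) : G.Meas)
  else ⊤

/-- `U` is an `i`-dominion inside the subgame induced on `W`. -/
def IsDominionIn (W : Set V) (i : Bool) (U : Set V) : Prop :=
  ∃ σ : List V → V → V,
    (∀ h u, u ∈ W → G.ownerEven u = i → G.E u (σ h u) ∧ σ h u ∈ W) ∧
    ∀ π, G.IsPlay π → (∀ n, π n ∈ W) → π 0 ∈ U → G.ConsH i σ π →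
      (∀ n, π n ∈ U) ∧ G.WonBy i π

/-- `U` is an `i`-dominion in `G`. -/
def IsDominion (i : Bool) (U : Set V) : Prop := G.IsDominionIn Set.univ i U

/-- Winning region of player `i` in the subgame induced on `W`. -/
def WinIn (W : Set V) (i : Bool) : Set V :=
  {v | v ∈ W ∧ ∃ σ : List V → V → V,
    (∀ h u, u ∈ W → G.ownerEven u = i → G.E u (σ h u) ∧ σ h u ∈ W) ∧
    ∀ π, G.IsPlay π → (∀ n, π n ∈ W) → π 0 = v → G.ConsH i σ π → G.WonBy i π}

end ParityGame

open ParityGame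
namespace ParityGame

set_option linter.unusedSectionVars false

variable {V : Type*} [Fintype V] [DecidableEq V] (G : ParityGame V)

/-! ### Generic play utilities -/

theorem infOft_shift (π : ℕ → V) (k p : ℕ) :
    G.InfOft (fun n => π (n + k)) p ↔ G.InfOft π p := by
  constructor
  · intro h N
    obtain ⟨n, hn, hp⟩ := h N
    exact ⟨n + k, le_trans hn (Nat.le_add_right _ _), hp⟩
  · intro h N
    obtain ⟨n, hn, hp⟩ := h (N + k)
    refine ⟨n - k, by omega, ?_⟩
    show G.prio (π (n - k + k)) = p
    have : n - k + k = n := by omega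
    rw [this]; exact hp

theorem wonByEven_shift (π : ℕ → V) (k : ℕ) :
    G.WonByEven (fun n => π (n + k)) ↔ G.WonByEven π := by
  unfold WonByEven
  have : {p | G.InfOft (fun n => π (n + k)) p} = {p | G.InfOft π p} := by
    ext p; exact G.infOft_shift π k p
  rw [this]

/-- Prepending a vertex to a play. -/
def consPlay (v : V) (π : ℕ → V) : ℕ → V := fun n => match n with
  | 0 => v
  | n + 1 => π n

@[simp] theorem consPlay_zero (v : V) (π : ℕ → V) : consPlay v π 0 = v := rfl
@[simp] theorem consPlay_succ (v : V) (π : ℕ → V) (n : ℕ) : consPlay v π (n + 1) = π n := rfl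

theorem wonByEven_consPlay (v : V) (π : ℕ → V) :
    G.WonByEven (consPlay v π) ↔ G.WonByEven π := by
  have := G.wonByEven_shift (consPlay v π) 1
  simpa using this.symm

theorem not_wonBy_both {π : ℕ → V} (h1 : G.WonBy true π) (h2 : G.WonBy false π) : False := by
  simp [WonBy] at h1 h2; exact h2 h1

end ParityGame
namespace ParityGame

set_option linter.unusedSectionVars false
set_option maxHeartbeats 1000000

variable {V : Type*} [Fintype V] [DecidableEq V] (G : ParityGame V)

/-! ### Lexicographic order toolkit -/

theorem lex_lt_iff {d : ℕ} {f g : Fin d → ℕ} :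
    toLex f < toLex g ↔ ∃ i, (∀ j, j < i → f j = g j) ∧ f i < g i := Iff.rfl

theorem lex_lt_of_le_of_lt {d : ℕ} {f g : Fin d → ℕ} (hle : ∀ j, f j ≤ g j) {i : Fin d}
    (hi : f i < g i) : toLex f < toLex g := by
  have h1 : toLex f ≤ toLex g := Pi.toLex_monotone hle
  have h2 : toLex f ≠ toLex g := by
    intro h
    have := congrFun (congrArg ofLex h) i
    simp at this; omega
  exact lt_of_le_of_ne h1 h2

@[simp] theorem trunc_top (k : ℕ) : G.trunc k (⊤ : G.Meas) = ⊤ := WithTop.map_top _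

@[simp] theorem trunc_coe (k : ℕ) (f : Lex (Fin G.d → ℕ)) :
    G.trunc k (f : G.Meas) =
      ((toLex (fun j : Fin G.d => if (j : ℕ) ≤ k then ofLex f j else 0) : Lex (Fin G.d → ℕ)) : G.Meas) :=
  WithTop.map_coe _ _

theorem trunc_eq_top {k : ℕ} {m : G.Meas} : G.trunc k m = ⊤ ↔ m = ⊤ := by
  induction m using WithTop.recTopCoe with
  | top => simp
  | coe f => simp

theorem trunc_mono {k : ℕ} : Monotone (G.trunc k) := by
  intro a b h
  induction b using WithTop.recTopCoe with
  | top => simp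
  | coe g =>
    induction a using WithTop.recTopCoe with
    | top => exact absurd (top_le_iff.mp h) (by simp)
    | coe f =>
      rw [trunc_coe, trunc_coe, WithTop.coe_le_coe]
      have hfg : f ≤ g := WithTop.coe_le_coe.mp h
      rcases lt_or_eq_of_le hfg with hlt | rfl
      · have hlt' : toLex (ofLex f) < toLex (ofLex g) := hlt
        obtain ⟨i, hji, hi⟩ := lex_lt_iff.mp hlt'
        by_cases hik : (i : ℕ) ≤ k
        · apply le_of_lt
          refine lex_lt_iff.mpr ⟨i, fun j hj => ?_, ?_⟩
          · by_cases hjk : (j : ℕ) ≤ k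
            · simpa [hjk] using hji j hj
            · simp [hjk]
          · simpa [hik] using hi
        · apply le_of_eq
          congr 1
          funext j
          by_cases hjk : (j : ℕ) ≤ k
          · have : j < i := by
              have : (j : ℕ) < (i : ℕ) := by omega
              exact this
            simpa [hjk] using hji j this
          · simp [hjk]
      · exact le_refl _

theorem trunc_trunc {k p : ℕ} (h : k ≤ p) (m : G.Meas) :
    G.trunc k (G.trunc p m) = G.trunc k m := by
  induction m using WithTop.recTopCoe with
  | top => simp
  | coe f =>
    rw [trunc_coe, trunc_coe, trunc_coe]
    congr 1
    apply congrArg toLex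
    funext j
    by_cases hj : (j : ℕ) ≤ k
    · simp [hj, hj.trans h]
    · simp [hj]

theorem geAt_mono_down {k p : ℕ} {a b : G.Meas} (hkp : k ≤ p) (h : G.geAt p a b) :
    G.geAt k a b := by
  unfold geAt at *
  calc G.trunc k b = G.trunc k (G.trunc p b) := (G.trunc_trunc hkp b).symm
    _ ≤ G.trunc k (G.trunc p a) := G.trunc_mono h
    _ = G.trunc k a := G.trunc_trunc hkp a

theorem gtAt_geAt {k : ℕ} {a b : G.Meas} (h : G.gtAt k a b) : G.geAt k a b := le_of_lt h

theorem geAt_trans {k : ℕ} {a b c : G.Meas} (h1 : G.geAt k a b) (h2 : G.geAt k b c) :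
    G.geAt k a c := le_trans h2 h1

theorem geAt_gtAt_trans {k : ℕ} {a b c : G.Meas} (h1 : G.geAt k a b) (h2 : G.gtAt k b c) :
    G.gtAt k a c := lt_of_lt_of_le h2 h1

theorem geAt_top {k : ℕ} {m : G.Meas} : G.geAt k (⊤ : G.Meas) m := by
  unfold geAt; rw [trunc_top]; exact le_top

theorem geAt_top_right {k : ℕ} {a : G.Meas} (h : G.geAt k a ⊤) : a = ⊤ := by
  unfold geAt at h
  rw [trunc_top] at h
  exact G.trunc_eq_top.mp (top_le_iff.mp h)

theorem geAt_of_le {k : ℕ} {a b : G.Meas} (h : b ≤ a) : G.geAt k a b := G.trunc_mono h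

theorem ne_top_of_geAt {k : ℕ} {a b : G.Meas} (h : G.geAt k a b) (ha : a ≠ ⊤) : b ≠ ⊤ :=
  fun hb => ha (G.geAt_top_right (hb ▸ h))

/-! ### Prog toolkit -/

theorem inMEven_top : G.inMEven (⊤ : G.Meas) := Or.inl rfl

theorem progCond_top (ρ : V → G.Meas) (v w : V) : G.progCond ρ v w ⊤ := by
  unfold progCond
  split
  · exact G.geAt_top
  · by_cases hw : ρ w = ⊤
    · exact Or.inr ⟨rfl, hw⟩
    · left
      unfold gtAt
      rw [trunc_top]
      exact lt_top_iff_ne_top.mpr (fun hc => hw (G.trunc_eq_top.mp hc))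

theorem meas_exists_least (S : Set G.Meas) (hS : S.Nonempty) : ∃ m, IsLeast S m := by
  obtain ⟨m, hm, hmin⟩ := (wellFounded_lt (α := G.Meas)).has_min S hS
  exact ⟨m, hm, fun x hx => not_lt.mp (hmin x hx)⟩

theorem prog_isLeast (ρ : V → G.Meas) (v w : V) :
    IsLeast {m | G.inMEven m ∧ G.progCond ρ v w m} (G.Prog ρ v w) := by
  have h : ∃ m, IsLeast {m | G.inMEven m ∧ G.progCond ρ v w m} m :=
    G.meas_exists_least _ ⟨⊤, G.inMEven_top, G.progCond_top ρ v w⟩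
  unfold Prog
  rw [dif_pos h]
  exact h.choose_spec

theorem prog_le {ρ : V → G.Meas} {v w : V} {m : G.Meas} (h1 : G.inMEven m)
    (h2 : G.progCond ρ v w m) : G.Prog ρ v w ≤ m :=
  (G.prog_isLeast ρ v w).2 ⟨h1, h2⟩

theorem gpm_step {ρ : V → G.Meas} {v w : V} (h : G.geAt (G.prio v) (ρ v) (G.Prog ρ v w)) :
    G.geAt (G.prio v) (ρ v) (ρ w) ∧
      (¬ Even (G.prio v) → (G.gtAt (G.prio v) (ρ v) (ρ w) ∨ ρ v = ⊤)) := by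
  have hc := (G.prog_isLeast ρ v w).1.2
  unfold progCond at hc
  by_cases hp : Even (G.prio v)
  · rw [if_pos hp] at hc
    exact ⟨G.geAt_trans h hc, fun h' => absurd hp h'⟩
  · rw [if_neg hp] at hc
    rcases hc with hgt | ⟨hPt, hwt⟩
    · exact ⟨G.gtAt_geAt (G.geAt_gtAt_trans h hgt), fun _ => Or.inl (G.geAt_gtAt_trans h hgt)⟩
    · have htop : ρ v = ⊤ := G.geAt_top_right (hPt ▸ h)
      refine ⟨?_, fun _ => Or.inr htop⟩
      rw [htop]; exact G.geAt_top

/-! ### Direction 1: finite measure implies Even wins -/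

theorem mem_winRegion_of_gpm {ρ : V → G.Meas} (hgpm : G.IsGPM ρ) {v : V} (hv : ρ v ≠ ⊤) :
    v ∈ G.WinRegion true := by
  classical
  have hch : ∀ u, ∃ w, (G.ownerEven u = true →
      (G.E u w ∧ G.geAt (G.prio u) (ρ u) (G.Prog ρ u w))) ∧
      (G.ownerEven u ≠ true → G.E u w) := by
    intro u
    by_cases h : G.ownerEven u = true
    · obtain ⟨w, hw⟩ := (hgpm.2 u).1 h
      exact ⟨w, fun _ => ⟨hw.1, hw.2⟩, fun hf => absurd h hf⟩
    · obtain ⟨w, hw⟩ := G.total u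
      exact ⟨w, fun ht => absurd ht h, fun _ => hw⟩
  choose σ0 hσ0 using hch
  refine ⟨fun _ u => σ0 u, ?_, ?_⟩
  · intro h u hu
    exact ((hσ0 u).1 hu).1
  intro π hplay h0 hcons
  have hstep : ∀ n, G.geAt (G.prio (π n)) (ρ (π n)) (G.Prog ρ (π n) (π (n + 1))) := by
    intro n
    by_cases h : G.ownerEven (π n) = true
    · have he := hcons n h
      rw [he]
      exact ((hσ0 (π n)).1 h).2
    · have hfalse : G.ownerEven (π n) = false := Bool.eq_false_iff.mpr h
      exact (hgpm.2 (π n)).2 hfalse (π (n + 1)) (hplay n)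
  have hstep' := fun n => G.gpm_step (hstep n)
  have hnt : ∀ n, ρ (π n) ≠ ⊤ := by
    intro n
    induction n with
    | zero => rw [h0]; exact hv
    | succ n ih => exact G.ne_top_of_geAt (hstep' n).1 ih
  have hwin : G.WonByEven π := by
    unfold WonByEven
    by_contra hodd
    have hne : {p | G.InfOft π p}.Nonempty := by
      by_contra he
      rw [Set.not_nonempty_iff_eq_empty] at he
      apply hodd
      rw [he, Nat.sInf_empty]
      exact Even.zero
    have hiI : G.InfOft π (sInf {p | G.InfOft π p}) := Nat.sInf_mem hne
    set i := sInf {p | G.InfOft π p} with hidef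
    have hlow : ∀ p, p < i → ∃ N, ∀ n, N ≤ n → G.prio (π n) ≠ p := by
      intro p hp
      have hpI : p ∉ {p | G.InfOft π p} := fun hmem => absurd (Nat.sInf_le hmem) (by omega)
      simp only [Set.mem_setOf_eq, InfOft] at hpI
      push_neg at hpI
      exact hpI
    choose Nf hNf using hlow
    have hbig : ∃ N, ∀ n, N ≤ n → i ≤ G.prio (π n) := by
      refine ⟨(Finset.range i).sup (fun p => if hp : p < i then Nf p hp else 0), ?_⟩
      intro n hn
      by_contra hlt
      push_neg at hlt
      have hle : Nf (G.prio (π n)) hlt ≤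
          (Finset.range i).sup (fun p => if hp : p < i then Nf p hp else 0) := by
        have hmem : G.prio (π n) ∈ Finset.range i := Finset.mem_range.mpr hlt
        have h2 := Finset.le_sup (f := fun p => if hp : p < i then Nf p hp else 0) hmem
        simpa [hlt] using h2
      exact hNf (G.prio (π n)) hlt n (le_trans hle hn) rfl
    obtain ⟨N, hN⟩ := hbig
    have hmono : ∀ n, N ≤ n → G.trunc i (ρ (π (n + 1))) ≤ G.trunc i (ρ (π n)) := by
      intro n hn
      exact G.geAt_mono_down (hN n hn) (hstep' n).1
    have hchain : ∀ k k', k ≤ k' →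
        G.trunc i (ρ (π (N + k'))) ≤ G.trunc i (ρ (π (N + k))) := by
      intro k k' hk
      induction k', hk using Nat.le_induction with
      | base => exact le_refl _
      | succ k' hk ih =>
        exact le_trans (hmono (N + k') (Nat.le_add_right _ _)) ih
    obtain ⟨m0, hm0mem, hm0min⟩ := (wellFounded_lt (α := G.Meas)).has_min
      (Set.range (fun k => G.trunc i (ρ (π (N + k))))) ⟨_, ⟨0, rfl⟩⟩
    obtain ⟨k0, hk0⟩ := hm0mem
    have hconst : ∀ k, k0 ≤ k → G.trunc i (ρ (π (N + k))) = m0 := by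
      intro k hk
      have h1 : G.trunc i (ρ (π (N + k))) ≤ m0 := hk0 ▸ hchain k0 k hk
      have h2 : ¬ G.trunc i (ρ (π (N + k))) < m0 := hm0min _ ⟨k, rfl⟩
      exact le_antisymm h1 (not_lt.mp h2)
    obtain ⟨n, hn, hpn⟩ := hiI (N + k0)
    have hodd' : ¬ Even (G.prio (π n)) := by rw [hpn]; exact hodd
    rcases (hstep' n).2 hodd' with hgt | htop
    · rw [hpn] at hgt
      have h1 : G.trunc i (ρ (π (N + (n - N)))) = m0 := hconst _ (by omega)
      have h2 : G.trunc i (ρ (π (N + (n - N + 1)))) = m0 := hconst _ (by omega)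
      rw [show N + (n - N) = n by omega] at h1
      rw [show N + (n - N + 1) = n + 1 by omega] at h2
      unfold gtAt at hgt
      rw [h1, h2] at hgt
      exact lt_irrefl _ hgt
    · exact hnt n htop
  simpa [WonBy] using hwin

end ParityGame
namespace ParityGame

set_option linter.unusedSectionVars false
set_option maxHeartbeats 1000000

variable {V : Type*} [Fintype V] [DecidableEq V] (G : ParityGame V)

/-! ### More play utilities -/

theorem isPlay_shift {π : ℕ → V} (h : G.IsPlay π) (k : ℕ) : G.IsPlay (fun n => π (n + k)) := by
  intro n
  have := h (n + k)
  simpa [Nat.add_right_comm] using this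

theorem consP_shift {i : Bool} {σ : V → V} {π : ℕ → V} (h : G.ConsP i σ π) (k : ℕ) :
    G.ConsP i σ (fun n => π (n + k)) := by
  intro n hn
  have := h (n + k) hn
  simpa [Nat.add_right_comm] using this

theorem wonBy_shift (i : Bool) (π : ℕ → V) (k : ℕ) :
    G.WonBy i (fun n => π (n + k)) ↔ G.WonBy i π := by
  cases i <;> simp [WonBy, G.wonByEven_shift π k]

theorem wonBy_consPlay (i : Bool) (v : V) (π : ℕ → V) :
    G.WonBy i (consPlay v π) ↔ G.WonBy i π := by
  cases i <;> simp [WonBy, G.wonByEven_consPlay v π]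

theorem isPlay_consPlay {v : V} {π : ℕ → V} (hE : G.E v (π 0)) (h : G.IsPlay π) :
    G.IsPlay (consPlay v π) := by
  intro n
  cases n with
  | zero => exact hE
  | succ n => exact h n

theorem consP_consPlay {i : Bool} {σ : V → V} {v : V} {π : ℕ → V}
    (h0 : G.ownerEven v = i → π 0 = σ v) (h : G.ConsP i σ π) :
    G.ConsP i σ (consPlay v π) := by
  intro n hn
  cases n with
  | zero => exact h0 hn
  | succ n => exact h n hn

theorem not_wonBy_both' {i : Bool} {π : ℕ → V} (h1 : G.WonBy i π) (h2 : G.WonBy (!i) π) :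
    False := by
  cases i
  · exact G.not_wonBy_both h2 h1
  · exact G.not_wonBy_both h1 h2

/-! ### Admissible carriers, positional winning -/

/-- Every vertex of `S` has a successor in `S`. -/
def Adm (S : Set V) : Prop := ∀ v ∈ S, ∃ w, G.E v w ∧ w ∈ S

/-- Positional strategy `σ` wins for player `i` from `v` among plays confined to `S`. -/
def PWins (S : Set V) (i : Bool) (σ : V → V) (v : V) : Prop :=
  ∀ π, G.IsPlay π → (∀ n, π n ∈ S) → π 0 = v → G.ConsP i σ π → G.WonBy i π

/-! ### Attractors -/

def AttrN (i : Bool) (S U : Set V) : ℕ → Set V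
  | 0 => U
  | n + 1 => AttrN i S U n ∪
      {v | v ∈ S ∧ ((G.ownerEven v = i ∧ ∃ w, G.E v w ∧ w ∈ S ∧ w ∈ AttrN i S U n) ∨
        (G.ownerEven v ≠ i ∧ ∀ w, G.E v w → w ∈ S → w ∈ AttrN i S U n))}

def AttrSet (i : Bool) (S U : Set V) : Set V := ⋃ n, G.AttrN i S U n

variable {i : Bool} {S U : Set V}

@[simp] theorem attrN_zero : G.AttrN i S U 0 = U := rfl

@[simp] theorem attrN_succ (n : ℕ) : G.AttrN i S U (n + 1) = G.AttrN i S U n ∪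
      {v | v ∈ S ∧ ((G.ownerEven v = i ∧ ∃ w, G.E v w ∧ w ∈ S ∧ w ∈ G.AttrN i S U n) ∨
        (G.ownerEven v ≠ i ∧ ∀ w, G.E v w → w ∈ S → w ∈ G.AttrN i S U n))} := rfl

theorem attrN_mono {m n : ℕ} (h : m ≤ n) : G.AttrN i S U m ⊆ G.AttrN i S U n := by
  induction n, h using Nat.le_induction with
  | base => exact subset_rfl
  | succ n hmn ih =>
    rw [attrN_succ]
    exact ih.trans Set.subset_union_left

theorem mem_attrSet {v : V} : v ∈ G.AttrSet i S U ↔ ∃ n, v ∈ G.AttrN i S U n := Set.mem_iUnion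

theorem subset_attrSet : U ⊆ G.AttrSet i S U := by
  intro v hv
  exact G.mem_attrSet.mpr ⟨0, by rw [attrN_zero]; exact hv⟩

theorem attrSet_subset (hU : U ⊆ S) : G.AttrSet i S U ⊆ S := by
  refine Set.iUnion_subset (fun n => ?_)
  induction n with
  | zero => rw [attrN_zero]; exact hU
  | succ n ih =>
    rw [attrN_succ]
    rintro v (hv | ⟨hvS, _⟩)
    · exact ih hv
    · exact hvS

theorem attr_closure_own {v w : V} (hv : v ∈ S) (ho : G.ownerEven v = i) (hE : G.E v w)
    (hwS : w ∈ S) (hw : w ∈ G.AttrSet i S U) : v ∈ G.AttrSet i S U := by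
  obtain ⟨n, hn⟩ := G.mem_attrSet.mp hw
  refine G.mem_attrSet.mpr ⟨n + 1, ?_⟩
  rw [attrN_succ]
  exact Or.inr ⟨hv, Or.inl ⟨ho, w, hE, hwS, hn⟩⟩

theorem attr_closure_opp {v : V} (hv : v ∈ S) (ho : G.ownerEven v ≠ i)
    (h : ∀ w, G.E v w → w ∈ S → w ∈ G.AttrSet i S U) : v ∈ G.AttrSet i S U := by
  classical
  have hch : ∀ w : V, ∃ n, G.E v w → w ∈ S → w ∈ G.AttrN i S U n := by
    intro w
    by_cases hw : G.E v w ∧ w ∈ S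
    · obtain ⟨n, hn⟩ := G.mem_attrSet.mp (h w hw.1 hw.2)
      exact ⟨n, fun _ _ => hn⟩
    · exact ⟨0, fun h1 h2 => absurd ⟨h1, h2⟩ hw⟩
  choose nf hnf using hch
  refine G.mem_attrSet.mpr ⟨Finset.univ.sup nf + 1, ?_⟩
  rw [attrN_succ]
  exact Or.inr ⟨hv, Or.inr ⟨ho, fun w hE hwS =>
    G.attrN_mono (Finset.le_sup (Finset.mem_univ w)) (hnf w hE hwS)⟩⟩

def attrRank (i : Bool) (S U : Set V) (v : V) : ℕ := sInf {n | v ∈ G.AttrN i S U n}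

theorem attr_step_own {v : V} (hv : v ∈ G.AttrSet i S U) (hvU : v ∉ U)
    (ho : G.ownerEven v = i) :
    ∃ w, G.E v w ∧ w ∈ S ∧ w ∈ G.AttrSet i S U ∧
      G.attrRank i S U w < G.attrRank i S U v := by
  have hne : {n | v ∈ G.AttrN i S U n}.Nonempty := G.mem_attrSet.mp hv
  have hmem : v ∈ G.AttrN i S U (G.attrRank i S U v) := Nat.sInf_mem hne
  cases hr : G.attrRank i S U v with
  | zero => rw [hr, attrN_zero] at hmem; exact absurd hmem hvU
  | succ m =>
    rw [hr, attrN_succ] at hmem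
    rcases hmem with hm | ⟨hvS, hcase⟩
    · have : G.attrRank i S U v ≤ m := Nat.sInf_le hm
      omega
    rcases hcase with ⟨_, w, hE, hwS, hwm⟩ | ⟨ho', _⟩
    · refine ⟨w, hE, hwS, G.mem_attrSet.mpr ⟨m, hwm⟩, ?_⟩
      have : G.attrRank i S U w ≤ m := Nat.sInf_le hwm
      omega
    · exact absurd ho ho'

theorem attr_step_opp {v : V} (hv : v ∈ G.AttrSet i S U) (hvU : v ∉ U)
    (ho : G.ownerEven v ≠ i) {w : V} (hE : G.E v w) (hwS : w ∈ S) :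
    w ∈ G.AttrSet i S U ∧ G.attrRank i S U w < G.attrRank i S U v := by
  have hne : {n | v ∈ G.AttrN i S U n}.Nonempty := G.mem_attrSet.mp hv
  have hmem : v ∈ G.AttrN i S U (G.attrRank i S U v) := Nat.sInf_mem hne
  cases hr : G.attrRank i S U v with
  | zero => rw [hr, attrN_zero] at hmem; exact absurd hmem hvU
  | succ m =>
    rw [hr, attrN_succ] at hmem
    rcases hmem with hm | ⟨hvS, hcase⟩
    · have : G.attrRank i S U v ≤ m := Nat.sInf_le hm
      omega
    rcases hcase with ⟨ho', _⟩ | ⟨_, hall⟩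
    · exact absurd ho' ho
    · have hwm := hall w hE hwS
      refine ⟨G.mem_attrSet.mpr ⟨m, hwm⟩, ?_⟩
      have : G.attrRank i S U w ≤ m := Nat.sInf_le hwm
      omega

theorem attr_reach {σ : V → V}
    (hσ : ∀ u, u ∈ G.AttrSet i S U → u ∉ U → G.ownerEven u = i →
      σ u ∈ G.AttrSet i S U ∧ G.attrRank i S U (σ u) < G.attrRank i S U u) :
    ∀ r (π : ℕ → V), G.IsPlay π → (∀ n, π n ∈ S) → G.ConsP i σ π →
      π 0 ∈ G.AttrSet i S U → G.attrRank i S U (π 0) ≤ r → ∃ m, π m ∈ U := by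
  intro r
  induction r with
  | zero =>
    intro π hplay hS hcons h0 hr
    by_cases hU : π 0 ∈ U
    · exact ⟨0, hU⟩
    · exfalso
      by_cases ho : G.ownerEven (π 0) = i
      · have h1 := hσ (π 0) h0 hU ho
        omega
      · have h1 := G.attr_step_opp h0 hU ho (hplay 0) (hS 1)
        omega
  | succ r ih =>
    intro π hplay hS hcons h0 hr
    by_cases hU : π 0 ∈ U
    · exact ⟨0, hU⟩
    · have h1 : π 1 ∈ G.AttrSet i S U ∧
          G.attrRank i S U (π 1) < G.attrRank i S U (π 0) := by
        by_cases ho : G.ownerEven (π 0) = i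
        · have := hσ (π 0) h0 hU ho
          rwa [← hcons 0 ho] at this
        · exact G.attr_step_opp h0 hU ho (hplay 0) (hS 1)
      obtain ⟨m, hm⟩ := ih (fun n => π (n + 1)) (G.isPlay_shift hplay 1)
        (fun n => hS (n + 1)) (G.consP_shift hcons 1) h1.1
        (by show G.attrRank i S U (π 1) ≤ r; omega)
      exact ⟨m + 1, hm⟩

/-! ### Positional determinacy data -/

structure Determinacy (G : ParityGame V) (S : Set V) where
  W : Bool → Set V
  σ : Bool → V → V
  subW : ∀ i, W i ⊆ S
  cover : S ⊆ W true ∪ W false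
  valid : ∀ i, ∀ u ∈ S, G.ownerEven u = i →
    G.E u (σ i u) ∧ σ i u ∈ S ∧ (u ∈ W i → σ i u ∈ W i)
  wins : ∀ i, ∀ v ∈ W i, G.PWins S i (σ i) v

/-- The play where both players follow their positional strategies. -/
def duel (σE σO : V → V) (v : V) : ℕ → V :=
  fun n => (fun u => if G.ownerEven u = true then σE u else σO u)^[n] v

theorem duel_zero (σE σO : V → V) (v : V) : G.duel σE σO v 0 = v := rfl

theorem duel_succ (σE σO : V → V) (v : V) (n : ℕ) :
    G.duel σE σO v (n + 1) =
      (fun u => if G.ownerEven u = true then σE u else σO u) (G.duel σE σO v n) :=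
  Function.iterate_succ_apply' _ _ _

section DuelFacts

variable {S : Set V} (D : G.Determinacy S)

theorem duel_mem {v : V} (hv : v ∈ S) (n : ℕ) : G.duel (D.σ true) (D.σ false) v n ∈ S := by
  induction n with
  | zero => exact hv
  | succ n ih =>
    rw [G.duel_succ]
    by_cases ho : G.ownerEven (G.duel (D.σ true) (D.σ false) v n) = true
    · simpa [ho] using (D.valid true _ ih ho).2.1
    · have ho' : G.ownerEven (G.duel (D.σ true) (D.σ false) v n) = false :=
        Bool.eq_false_iff.mpr ho
      simpa [ho] using (D.valid false _ ih ho').2.1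

theorem duel_isPlay {v : V} (hv : v ∈ S) : G.IsPlay (G.duel (D.σ true) (D.σ false) v) := by
  intro n
  rw [G.duel_succ]
  by_cases ho : G.ownerEven (G.duel (D.σ true) (D.σ false) v n) = true
  · simpa [ho] using (D.valid true _ (G.duel_mem D hv n) ho).1
  · have ho' : G.ownerEven (G.duel (D.σ true) (D.σ false) v n) = false :=
      Bool.eq_false_iff.mpr ho
    simpa [ho] using (D.valid false _ (G.duel_mem D hv n) ho').1

theorem duel_cons (j : Bool) {v : V} :
    G.ConsP j (D.σ j) (G.duel (D.σ true) (D.σ false) v) := by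
  intro n hn
  rw [G.duel_succ]
  cases j
  · simp [hn]
  · simp [hn]

theorem no_both {v : V} (h1 : v ∈ D.W true) (h2 : v ∈ D.W false) : False := by
  have hv : v ∈ S := D.subW true h1
  have hw1 := D.wins true v h1 _ (G.duel_isPlay D hv) (G.duel_mem D hv) rfl (G.duel_cons D true)
  have hw2 := D.wins false v h2 _ (G.duel_isPlay D hv) (G.duel_mem D hv) rfl (G.duel_cons D false)
  exact G.not_wonBy_both hw1 hw2

theorem opp_closed {i : Bool} {v w : V} (hv : v ∈ D.W i) (ho : G.ownerEven v ≠ i)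
    (hE : G.E v w) (hwS : w ∈ S) : w ∈ D.W i := by
  by_contra hwi
  have hw' : w ∈ D.W (!i) := by
    rcases D.cover hwS with h | h
    · cases i
      · exact h
      · exact absurd h hwi
    · cases i
      · exact absurd h hwi
      · exact h
  set ρ := G.duel (D.σ true) (D.σ false) w with hρ
  have hρ0 : ρ 0 = w := rfl
  have hπ : G.ConsP i (D.σ i) (consPlay v ρ) :=
    G.consP_consPlay (fun h => absurd h ho) (G.duel_cons D i)
  have hmem : ∀ n, consPlay v ρ n ∈ S := by
    intro n
    cases n with
    | zero => exact D.subW i hv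
    | succ n => exact G.duel_mem D hwS n
  have hplay : G.IsPlay (consPlay v ρ) :=
    G.isPlay_consPlay (by rw [hρ0]; exact hE) (G.duel_isPlay D hwS)
  have hw1 : G.WonBy i (consPlay v ρ) := D.wins i v hv _ hplay hmem rfl hπ
  have hw2 : G.WonBy (!i) ρ := D.wins (!i) w hw' _ (G.duel_isPlay D hwS)
    (G.duel_mem D hwS) rfl (G.duel_cons D (!i))
  exact G.not_wonBy_both' hw1 ((G.wonBy_consPlay (!i) v ρ).mpr hw2)

end DuelFacts

end ParityGame
namespace ParityGame

set_option linter.unusedSectionVars false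
set_option maxHeartbeats 2000000

variable {V : Type*} [Fintype V] [DecidableEq V] (G : ParityGame V)

theorem wonBy_iff_even {π : ℕ → V} {i : Bool} :
    G.WonBy i π ↔ (if i = true then G.WonByEven π else ¬ G.WonByEven π) := by
  cases i <;> simp [WonBy]

end ParityGame

/-- Choice of two values indexed by `Bool`, centred at `i`. -/
def bpick {α : Type*} (i : Bool) (x y : α) : Bool → α := fun j => if j = i then x else y

theorem bpick_same {α : Type*} (i : Bool) (x y : α) : bpick i x y i = x := if_pos rfl

theorem bpick_other {α : Type*} {i j : Bool} (x y : α) (h : j ≠ i) : bpick i x y j = y :=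
  if_neg h

theorem bpick_not {α : Type*} (i : Bool) (x y : α) : bpick i x y (!i) = y :=
  if_neg (by cases i <;> simp)

theorem bool_eq_not {a b : Bool} (h : a ≠ b) : a = !b := by
  cases a <;> cases b <;> simp_all

theorem bool_not_ne (b : Bool) : (!b) ≠ b := by cases b <;> simp

namespace ParityGame

set_option linter.unusedSectionVars false
set_option maxHeartbeats 2000000

variable {V : Type*} [Fintype V] [DecidableEq V] (G : ParityGame V)

theorem union_cases {W : Bool → Set V} {u : V} (j : Bool) (h : u ∈ W true ∪ W false) :
    u ∈ W j ∨ u ∈ W (!j) := by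
  cases j
  · exact h.symm
  · exact h

theorem mem_union_of_bool {W : Bool → Set V} {u : V} (j : Bool) (h : u ∈ W j) :
    u ∈ W true ∪ W false := by
  cases j
  · exact Or.inr h
  · exact Or.inl h

theorem determinacy :
    ∀ (n : ℕ) (S : Set V), S.ncard = n → G.Adm S → Nonempty (G.Determinacy S) := by
  intro n
  induction n using Nat.strong_induction_on with
  | _ n IH =>
  intro S hn hAdm
  by_cases hSemp : S = ∅
  · subst hSemp
    refine ⟨⟨fun _ => ∅, fun _ => id, fun _ => subset_rfl, by simp, ?_, ?_⟩⟩
    · intro i u hu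
      exact absurd hu (Set.notMem_empty u)
    · intro i v hv
      exact absurd hv (Set.notMem_empty v)
  have hSne : S.Nonempty := Set.nonempty_iff_ne_empty.mpr hSemp
  have hSfin : S.Finite := Set.toFinite S
  have hPne : (G.prio '' S).Nonempty := hSne.image _
  set p := sInf (G.prio '' S) with hpdef
  obtain ⟨v0, hv0S, hv0p⟩ := Nat.sInf_mem hPne
  have hplow : ∀ v ∈ S, p ≤ G.prio v := fun v hv => Nat.sInf_le ⟨v, hv, rfl⟩
  set i : Bool := decide (Even p) with hidef
  have hieven : (i = true) ↔ Even p := by rw [hidef]; exact decide_eq_true_iff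
  have hinot : (i = false) ↔ ¬ Even p := by
    rw [hidef]
    cases h : decide (Even p) <;> simp_all
  set P : Set V := {v | v ∈ S ∧ G.prio v = p} with hPdef
  have hPS : P ⊆ S := fun v hv => hv.1
  set A := G.AttrSet i S P with hAdef
  have hPA : P ⊆ A := G.subset_attrSet
  have hAS : A ⊆ S := G.attrSet_subset hPS
  set S1 := S \ A with hS1def
  have hS1S : S1 ⊆ S := Set.diff_subset
  have hS1adm : G.Adm S1 := by
    intro v hv
    by_cases ho : G.ownerEven v = i
    · obtain ⟨w, hE, hwS⟩ := hAdm v hv.1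
      refine ⟨w, hE, hwS, fun hwA => hv.2 ?_⟩
      exact G.attr_closure_own hv.1 ho hE hwS hwA
    · by_contra hno
      push_neg at hno
      apply hv.2
      apply G.attr_closure_opp hv.1 ho
      intro w hE hwS
      by_contra hwA
      exact hno w hE ⟨hwS, hwA⟩
  have hS1card : S1.ncard < n := by
    rw [← hn]
    apply Set.ncard_lt_ncard _ hSfin
    exact ⟨Set.diff_subset, fun hcon => (hcon hv0S).2 (hPA ⟨hv0S, hv0p⟩)⟩
  obtain ⟨D1⟩ := IH S1.ncard hS1card S1 rfl hS1adm
  -- fallback strategy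
  have hfb0 : ∀ u, ∃ w, u ∈ S → (G.E u w ∧ w ∈ S) := by
    intro u
    by_cases hu : u ∈ S
    · obtain ⟨w, h⟩ := hAdm u hu
      exact ⟨w, fun _ => h⟩
    · exact ⟨u, fun h => absurd h hu⟩
  choose fb hfb using hfb0
  -- attractor strategy towards P
  have haA0 : ∀ u, ∃ w, (u ∈ A ∧ u ∉ P ∧ G.ownerEven u = i) →
      (G.E u w ∧ w ∈ S ∧ w ∈ A ∧ G.attrRank i S P w < G.attrRank i S P u) := by
    intro u
    by_cases h : u ∈ A ∧ u ∉ P ∧ G.ownerEven u = i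
    · obtain ⟨w, hw⟩ := G.attr_step_own h.1 h.2.1 h.2.2
      exact ⟨w, fun _ => hw⟩
    · exact ⟨u, fun hc => absurd hc h⟩
  choose aA haA using haA0
  have hini : (!i) ≠ i := bool_not_ne i
  have hcov1 : ∀ u ∈ S1, u ∈ D1.W i ∨ u ∈ D1.W (!i) := fun u hu =>
    union_cases i (D1.cover hu)
  by_cases hUe : D1.W (!i) = ∅
  -- CASE 1 : player i wins everywhere on S
  · set σi : V → V := fun u => if u ∈ S1 then D1.σ i u else
      if u ∈ A ∧ u ∉ P ∧ G.ownerEven u = i then aA u else fb u with hσidef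
    have hcov1' : ∀ u ∈ S1, u ∈ D1.W i := by
      intro u hu
      rcases hcov1 u hu with h | h
      · exact h
      · rw [hUe] at h
        exact absurd h (Set.notMem_empty u)
    refine ⟨⟨bpick i S ∅, bpick i σi fb, ?_, ?_, ?_, ?_⟩⟩
    · intro j
      by_cases hj : j = i
      · subst hj
        rw [bpick_same]
      · rw [bpick_other _ _ hj]
        exact Set.empty_subset S
    · intro v hv
      refine mem_union_of_bool (W := bpick i S ∅) i ?_
      rw [bpick_same]
      exact hv
    · intro j u hu ho
      by_cases hj : j = i
      · subst hj
        rw [bpick_same, bpick_same]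
        by_cases h1 : u ∈ S1
        · have hval := D1.valid i u h1 ho
          simp only [hσidef, if_pos h1]
          exact ⟨hval.1, hS1S hval.2.1, fun _ => hS1S hval.2.1⟩
        · by_cases h2 : u ∈ A ∧ u ∉ P ∧ G.ownerEven u = i
          · have hspec := haA u h2
            simp only [hσidef, if_neg h1, if_pos h2]
            exact ⟨hspec.1, hspec.2.1, fun _ => hspec.2.1⟩
          · simp only [hσidef, if_neg h1, if_neg h2]
            exact ⟨(hfb u hu).1, (hfb u hu).2, fun _ => (hfb u hu).2⟩
      · rw [bpick_other _ _ hj, bpick_other _ _ hj]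
        exact ⟨(hfb u hu).1, (hfb u hu).2, fun h => absurd h (Set.notMem_empty u)⟩
    · intro j v hv
      by_cases hj : j = i
      swap
      · rw [bpick_other _ _ hj] at hv
        exact absurd hv (Set.notMem_empty v)
      subst hj
      rw [bpick_same] at hv
      rw [bpick_same]
      intro π hplay hmem h0 hcons
      by_cases hc : ∀ N, ∃ m, N ≤ m ∧ π m ∈ A
      · -- visits P infinitely often
        have hσ : ∀ u, u ∈ G.AttrSet i S P → u ∉ P → G.ownerEven u = i →
            σi u ∈ G.AttrSet i S P ∧ G.attrRank i S P (σi u) < G.attrRank i S P u := by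
          intro u huA huP ho
          have hnS1 : u ∉ S1 := fun h => h.2 huA
          have hcond : u ∈ A ∧ u ∉ P ∧ G.ownerEven u = i := ⟨huA, huP, ho⟩
          simp only [hσidef, if_neg hnS1, if_pos hcond]
          exact ⟨(haA u hcond).2.2.1, (haA u hcond).2.2.2⟩
        have hP : ∀ N, ∃ m, N ≤ m ∧ π m ∈ P := by
          intro N
          obtain ⟨m, hm, hmA⟩ := hc N
          obtain ⟨k, hk⟩ := G.attr_reach hσ (G.attrRank i S P (π (0 + m)))
            (fun n => π (n + m)) (G.isPlay_shift hplay m) (fun n => hmem (n + m))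
            (G.consP_shift hcons m)
            (by show π (0 + m) ∈ G.AttrSet i S P; rw [Nat.zero_add]; exact hmA) le_rfl
          exact ⟨k + m, by omega, hk⟩
        have hpmem : G.InfOft π p := by
          intro N
          obtain ⟨m, hm, hmP⟩ := hP N
          exact ⟨m, hm, hmP.2⟩
        have hpmem' : p ∈ {q | G.InfOft π q} := hpmem
        have hne2 : {q | G.InfOft π q}.Nonempty := ⟨p, hpmem'⟩
        have hsinf : sInf {q | G.InfOft π q} = p := by
          apply le_antisymm (Nat.sInf_le hpmem')
          apply le_csInf hne2
          intro q hq
          obtain ⟨m, _, hqm⟩ := hq 0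
          rw [← hqm]
          exact hplow (π m) (hmem m)
        have hwe : G.WonByEven π ↔ Even p := by
          unfold WonByEven
          rw [hsinf]
        rw [G.wonBy_iff_even]
        by_cases hev : Even p
        · rw [if_pos (hieven.mpr hev)]
          exact hwe.mpr hev
        · have hif : i = false := hinot.mpr hev
          rw [if_neg (by rw [hif]; simp)]
          exact fun h => hev (hwe.mp h)
      · push_neg at hc
        obtain ⟨N, hN⟩ := hc
        have htS1 : ∀ n, π (n + N) ∈ S1 := by
          intro n
          exact ⟨hmem (n + N), hN (n + N) (by omega)⟩
        have hcons' : G.ConsP i (D1.σ i) (fun n => π (n + N)) := by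
          intro n ho
          have heq := (G.consP_shift hcons N) n ho
          rw [heq]
          show σi (π (n + N)) = D1.σ i (π (n + N))
          simp only [hσidef, if_pos (htS1 n)]
        have hwin := D1.wins i (π (0 + N)) (hcov1' (π (0 + N)) (htS1 0)) (fun n => π (n + N))
          (G.isPlay_shift hplay N) htS1 rfl hcons'
        exact (G.wonBy_shift i π N).mp hwin
  -- CASE 2
  · have hUne : (D1.W (!i)).Nonempty := Set.nonempty_iff_ne_empty.mpr hUe
    set U := D1.W (!i) with hUdef
    have hUS1 : U ⊆ S1 := D1.subW (!i)
    have hUS : U ⊆ S := hUS1.trans hS1S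
    set B := G.AttrSet (!i) S U with hBdef
    have hUB : U ⊆ B := G.subset_attrSet
    have hBS : B ⊆ S := G.attrSet_subset hUS
    set S2 := S \ B with hS2def
    have hS2S : S2 ⊆ S := Set.diff_subset
    have hS2adm : G.Adm S2 := by
      intro v hv
      by_cases ho : G.ownerEven v = !i
      · obtain ⟨w, hE, hwS⟩ := hAdm v hv.1
        refine ⟨w, hE, hwS, fun hwB => hv.2 ?_⟩
        exact G.attr_closure_own hv.1 ho hE hwS hwB
      · by_contra hno
        push_neg at hno
        apply hv.2
        apply G.attr_closure_opp hv.1 ho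
        intro w hE hwS
        by_contra hwB
        exact hno w hE ⟨hwS, hwB⟩
    have hS2card : S2.ncard < n := by
      rw [← hn]
      apply Set.ncard_lt_ncard _ hSfin
      obtain ⟨u0, hu0⟩ := hUne
      exact ⟨Set.diff_subset, fun hcon => (hcon (hUS hu0)).2 (hUB hu0)⟩
    obtain ⟨D2⟩ := IH S2.ncard hS2card S2 rfl hS2adm
    -- attractor strategy towards U
    have haB0 : ∀ u, ∃ w, (u ∈ B ∧ u ∉ U ∧ G.ownerEven u = !i) →
        (G.E u w ∧ w ∈ S ∧ w ∈ B ∧ G.attrRank (!i) S U w < G.attrRank (!i) S U u) := by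
      intro u
      by_cases h : u ∈ B ∧ u ∉ U ∧ G.ownerEven u = !i
      · obtain ⟨w, hw⟩ := G.attr_step_own h.1 h.2.1 h.2.2
        exact ⟨w, fun _ => hw⟩
      · exact ⟨u, fun hc => absurd hc h⟩
    choose aB haB using haB0
    set σo : V → V := fun u => if u ∈ U then D1.σ (!i) u else
      if u ∈ B ∧ u ∉ U ∧ G.ownerEven u = !i then aB u else
      if u ∈ S2 then D2.σ (!i) u else fb u with hσodef
    set σi2 : V → V := fun u => if u ∈ S2 then D2.σ i u else fb u with hσi2def
    -- U is closed
    have hUclosedOwn : ∀ u ∈ U, G.ownerEven u = !i → σo u ∈ U := by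
      intro u hu ho
      have hval := (D1.valid (!i) u (hUS1 hu) ho).2.2 hu
      simp only [hσodef, if_pos hu]
      exact hval
    have hUclosedOpp : ∀ u ∈ U, G.ownerEven u ≠ !i → ∀ w, G.E u w → w ∈ S → w ∈ U := by
      intro u hu ho w hE hwS
      have hoi : G.ownerEven u = i := by
        have h := bool_eq_not ho
        rwa [Bool.not_not] at h
      have hwA : w ∉ A := by
        intro hwA
        exact (hUS1 hu).2 (G.attr_closure_own (hUS hu) hoi hE hwS hwA)
      exact G.opp_closed D1 hu ho hE ⟨hwS, hwA⟩
    -- B is invariant along σo-plays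
    have hBinv : ∀ (π : ℕ → V), G.IsPlay π → (∀ k, π k ∈ S) → G.ConsP (!i) σo π →
        ∀ k, π k ∈ B → π (k + 1) ∈ B := by
      intro π hplay hmem hcons k hk
      by_cases ho : G.ownerEven (π k) = !i
      · rw [hcons k ho]
        by_cases hU : π k ∈ U
        · exact hUB (hUclosedOwn (π k) hU ho)
        · have hcond : π k ∈ B ∧ π k ∉ U ∧ G.ownerEven (π k) = !i := ⟨hk, hU, ho⟩
          simp only [hσodef, if_neg hU, if_pos hcond]
          exact (haB (π k) hcond).2.2.1
      · by_cases hU : π k ∈ U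
        · exact hUB (hUclosedOpp (π k) hU ho (π (k + 1)) (hplay k) (hmem (k + 1)))
        · exact (G.attr_step_opp hk hU ho (hplay k) (hmem (k + 1))).1
    have hUinv : ∀ (π : ℕ → V), G.IsPlay π → (∀ k, π k ∈ S) → G.ConsP (!i) σo π →
        ∀ k, π k ∈ U → π (k + 1) ∈ U := by
      intro π hplay hmem hcons k hk
      by_cases ho : G.ownerEven (π k) = !i
      · rw [hcons k ho]
        exact hUclosedOwn (π k) hk ho
      · exact hUclosedOpp (π k) hk ho (π (k + 1)) (hplay k) (hmem (k + 1))
    -- player !i wins from B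
    have winsB : ∀ v ∈ B, G.PWins S (!i) σo v := by
      intro v hv π hplay hmem h0 hcons
      have hallB : ∀ k, π k ∈ B := by
        intro k
        induction k with
        | zero => rw [h0]; exact hv
        | succ k ih => exact hBinv π hplay hmem hcons k ih
      have hσ : ∀ u, u ∈ G.AttrSet (!i) S U → u ∉ U → G.ownerEven u = !i →
          σo u ∈ G.AttrSet (!i) S U ∧
            G.attrRank (!i) S U (σo u) < G.attrRank (!i) S U u := by
        intro u huB huU ho
        have hcond : u ∈ B ∧ u ∉ U ∧ G.ownerEven u = !i := ⟨huB, huU, ho⟩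
        simp only [hσodef, if_neg huU, if_pos hcond]
        exact ⟨(haB u hcond).2.2.1, (haB u hcond).2.2.2⟩
      obtain ⟨m, hm⟩ := G.attr_reach hσ (G.attrRank (!i) S U (π 0)) π hplay hmem hcons
        (hallB 0) le_rfl
      have hUtail : ∀ k, π (m + k) ∈ U := by
        intro k
        induction k with
        | zero => exact hm
        | succ k ih =>
          have hstep := hUinv π hplay hmem hcons (m + k) ih
          rwa [Nat.add_assoc] at hstep
      have hconsU : G.ConsP (!i) (D1.σ (!i)) (fun n => π (n + m)) := by
        intro n ho
        have heq := (G.consP_shift hcons m) n ho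
        rw [heq]
        show σo (π (n + m)) = D1.σ (!i) (π (n + m))
        have hmemU : π (n + m) ∈ U := by rw [Nat.add_comm n m]; exact hUtail n
        simp only [hσodef, if_pos hmemU]
      have hmemU : ∀ n, (fun n => π (n + m)) n ∈ S1 := by
        intro n
        apply hUS1
        show π (n + m) ∈ U
        rw [Nat.add_comm n m]
        exact hUtail n
      have h0U : π (0 + m) ∈ U := by rw [Nat.zero_add]; exact hm
      have hwin := D1.wins (!i) (π (0 + m)) h0U (fun n => π (n + m))
        (G.isPlay_shift hplay m) hmemU rfl hconsU
      exact (G.wonBy_shift (!i) π m).mp hwin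
    -- assemble
    refine ⟨⟨bpick i (D2.W i) (D2.W (!i) ∪ B), bpick i σi2 σo, ?_, ?_, ?_, ?_⟩⟩
    · intro j
      by_cases hj : j = i
      · subst hj
        rw [bpick_same]
        exact (D2.subW i).trans hS2S
      · rw [bpick_other _ _ hj]
        exact Set.union_subset ((D2.subW (!i)).trans hS2S) hBS
    · intro v hv
      by_cases hvB : v ∈ B
      · refine mem_union_of_bool (W := bpick i (D2.W i) (D2.W (!i) ∪ B)) (!i) ?_
        rw [bpick_not]
        exact Or.inr hvB
      · have hv2 : v ∈ S2 := ⟨hv, hvB⟩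
        rcases union_cases i (D2.cover hv2) with h | h
        · refine mem_union_of_bool (W := bpick i (D2.W i) (D2.W (!i) ∪ B)) i ?_
          rw [bpick_same]
          exact h
        · refine mem_union_of_bool (W := bpick i (D2.W i) (D2.W (!i) ∪ B)) (!i) ?_
          rw [bpick_not]
          exact Or.inl h
    · intro j u hu ho
      by_cases hj : j = i
      · subst hj
        rw [bpick_same, bpick_same]
        by_cases h2 : u ∈ S2
        · have hval := D2.valid i u h2 ho
          simp only [hσi2def, if_pos h2]
          exact ⟨hval.1, hS2S hval.2.1, fun hW => hval.2.2 hW⟩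
        · simp only [hσi2def, if_neg h2]
          exact ⟨(hfb u hu).1, (hfb u hu).2, fun hW => absurd (D2.subW i hW) h2⟩
      · have hj' : j = !i := bool_eq_not hj
        subst hj'
        rw [bpick_not, bpick_not]
        by_cases hU : u ∈ U
        · have hval := D1.valid (!i) u (hUS1 hU) ho
          simp only [hσodef, if_pos hU]
          exact ⟨hval.1, hS1S hval.2.1, fun _ => Or.inr (hUB (hval.2.2 hU))⟩
        · by_cases hB : u ∈ B
          · have hcond : u ∈ B ∧ u ∉ U ∧ G.ownerEven u = !i := ⟨hB, hU, ho⟩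
            simp only [hσodef, if_neg hU, if_pos hcond]
            exact ⟨(haB u hcond).1, (haB u hcond).2.1,
              fun _ => Or.inr (haB u hcond).2.2.1⟩
          · have h2 : u ∈ S2 := ⟨hu, hB⟩
            have hval := D2.valid (!i) u h2 ho
            have hcond' : ¬ (u ∈ B ∧ u ∉ U ∧ G.ownerEven u = !i) := fun hc => hB hc.1
            simp only [hσodef, if_neg hU, if_neg hcond', if_pos h2]
            refine ⟨hval.1, hS2S hval.2.1, fun hW => ?_⟩
            rcases hW with hW | hW
            · exact Or.inl (hval.2.2 hW)
            · exact absurd hW hB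
    · intro j v hv
      by_cases hj : j = i
      · subst hj
        rw [bpick_same] at hv
        rw [bpick_same]
        intro π hplay hmem h0 hcons
        have hall : ∀ k, π k ∈ D2.W i := by
          intro k
          induction k with
          | zero => rw [h0]; exact hv
          | succ k ih =>
            by_cases ho : G.ownerEven (π k) = i
            · rw [hcons k ho]
              have h2 : π k ∈ S2 := D2.subW i ih
              simp only [hσi2def, if_pos h2]
              exact (D2.valid i (π k) h2 ho).2.2 ih
            · have ho' : G.ownerEven (π k) = !i := bool_eq_not ho
              have hwS : π (k + 1) ∈ S := hmem (k + 1)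
              have hwB : π (k + 1) ∉ B := by
                intro hwB
                exact (D2.subW i ih).2
                  (G.attr_closure_own (hmem k) ho' (hplay k) hwS hwB)
              exact G.opp_closed D2 ih ho (hplay k) ⟨hwS, hwB⟩
        have hmem2 : ∀ k, π k ∈ S2 := fun k => D2.subW i (hall k)
        have hcons2 : G.ConsP i (D2.σ i) π := by
          intro k ho
          have heq := hcons k ho
          rw [heq]
          show σi2 (π k) = D2.σ i (π k)
          simp only [hσi2def, if_pos (hmem2 k)]
        exact D2.wins i v hv π hplay hmem2 h0 hcons2
      · have hj' : j = !i := bool_eq_not hj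
        subst hj'
        rw [bpick_not] at hv
        rw [bpick_not]
        intro π hplay hmem h0 hcons
        by_cases hB : ∃ k, π k ∈ B
        · obtain ⟨k, hk⟩ := hB
          have hwin := winsB (π (0 + k)) (by rw [Nat.zero_add]; exact hk)
            (fun n => π (n + k)) (G.isPlay_shift hplay k)
            (fun n => hmem (n + k)) rfl (G.consP_shift hcons k)
          exact (G.wonBy_shift (!i) π k).mp hwin
        · push_neg at hB
          have hv2 : v ∈ D2.W (!i) := by
            rcases hv with hv | hv
            · exact hv
            · exfalso
              apply hB 0
              rw [h0]
              exact hv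
          have hall : ∀ k, π k ∈ D2.W (!i) := by
            intro k
            induction k with
            | zero => rw [h0]; exact hv2
            | succ k ih =>
              by_cases ho : G.ownerEven (π k) = !i
              · rw [hcons k ho]
                have hU : π k ∉ U := fun h => hB k (hUB h)
                have hcond' : ¬ (π k ∈ B ∧ π k ∉ U ∧ G.ownerEven (π k) = !i) :=
                  fun hc => hB k hc.1
                have h2 : π k ∈ S2 := D2.subW (!i) ih
                simp only [hσodef, if_neg hU, if_neg hcond', if_pos h2]
                exact (D2.valid (!i) (π k) h2 ho).2.2 ih
              · have hwS : π (k + 1) ∈ S := hmem (k + 1)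
                have hw2 : π (k + 1) ∈ S2 := ⟨hwS, hB (k + 1)⟩
                exact G.opp_closed D2 ih ho (hplay k) hw2
          have hmem2 : ∀ k, π k ∈ S2 := fun k => D2.subW (!i) (hall k)
          have hcons2 : G.ConsP (!i) (D2.σ (!i)) π := by
            intro k ho
            have heq := hcons k ho
            rw [heq]
            show σo (π k) = D2.σ (!i) (π k)
            have hU : π k ∉ U := fun h => hB k (hUB h)
            have hcond' : ¬ (π k ∈ B ∧ π k ∉ U ∧ G.ownerEven (π k) = !i) :=
              fun hc => hB k hc.1
            simp only [hσodef, if_neg hU, if_neg hcond', if_pos (hmem2 k)]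
          exact D2.wins (!i) v hv2 π hplay hmem2 h0 hcons2

end ParityGame
namespace ParityGame

set_option linter.unusedSectionVars false
set_option maxHeartbeats 2000000

variable {V : Type*} [Fintype V] [DecidableEq V] (G : ParityGame V)

theorem succ_mod (a c : ℕ) (hc : 0 < c) :
    (a + 1) % c = if a % c + 1 = c then 0 else a % c + 1 := by
  have h1 : (a + 1) % c = (a % c + 1) % c := by
    conv_lhs => rw [← Nat.div_add_mod a c, Nat.add_assoc, Nat.mul_add_mod]
  rw [h1]
  have hlt : a % c < c := Nat.mod_lt _ hc
  by_cases h : a % c + 1 = c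
  · rw [if_pos h, h, Nat.mod_self]
  · rw [if_neg h, Nat.mod_eq_of_lt (by omega)]

theorem prio_lt_d (v : V) : G.prio v < G.d :=
  Nat.lt_succ_of_le (Finset.le_sup (Finset.mem_univ v))

/-- The pumping construction: a lasso play from a repeated vertex. -/
theorem pump {τ : V → V} {π : ℕ → V} (hplay : G.IsPlay π) (hcons : G.ConsP true τ π)
    {m1 m2 : ℕ} (hlt : m1 < m2) (heq : π m1 = π m2) :
    ∃ π' : ℕ → V, G.IsPlay π' ∧ G.ConsP true τ π' ∧ π' 0 = π 0 ∧
      (∀ n, m1 ≤ n → ∃ r, m1 + r < m2 ∧ π' n = π (m1 + r)) ∧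
      (∀ r, m1 + r < m2 → G.InfOft π' (G.prio (π (m1 + r)))) := by
  set c0 := m2 - m1 with hc0
  have hc0pos : 0 < c0 := by omega
  set π' : ℕ → V := fun n => if n < m1 then π n else π (m1 + (n - m1) % c0) with hπ'def
  have hval : ∀ n, m1 ≤ n → π' n = π (m1 + (n - m1) % c0) := by
    intro n hn
    simp only [hπ'def, if_neg (by omega : ¬ n < m1)]
  have hval' : ∀ n, n < m1 → π' n = π n := by
    intro n hn
    simp only [hπ'def, if_pos hn]
  have hstep : ∀ n, ∃ k, π' n = π k ∧ π' (n + 1) = π (k + 1) := by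
    intro n
    by_cases h1 : n + 1 < m1
    · exact ⟨n, hval' n (by omega), hval' (n + 1) h1⟩
    · by_cases h2 : n < m1
      · refine ⟨n, hval' n h2, ?_⟩
        have hm : n + 1 = m1 := by omega
        have h0 : n + 1 - m1 = 0 := by omega
        rw [hval (n + 1) (by omega), h0]
        simp only [Nat.zero_mod, Nat.add_zero]
        rw [hm]
      · have hn : m1 ≤ n := by omega
        set r := (n - m1) % c0 with hr
        have hrlt : r < c0 := Nat.mod_lt _ hc0pos
        have hsucc : (n + 1 - m1) % c0 = if r + 1 = c0 then 0 else r + 1 := by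
          have he : n + 1 - m1 = (n - m1) + 1 := by omega
          rw [he, succ_mod _ _ hc0pos, ← hr]
        by_cases hw : r + 1 = c0
        · refine ⟨m1 + r, hval n hn, ?_⟩
          rw [hval (n + 1) (by omega), hsucc, if_pos hw, Nat.add_zero]
          have hm2 : m1 + r + 1 = m2 := by omega
          rw [hm2]
          exact heq
        · exact ⟨m1 + r, hval n hn, by rw [hval (n + 1) (by omega), hsucc, if_neg hw, ← Nat.add_assoc]⟩
  have hplay' : G.IsPlay π' := by
    intro n
    obtain ⟨k, h1, h2⟩ := hstep n
    rw [h1, h2]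
    exact hplay k
  have hcons' : G.ConsP true τ π' := by
    intro n ho
    obtain ⟨k, h1, h2⟩ := hstep n
    rw [h1] at ho
    rw [h1, h2]
    exact hcons k ho
  have h0 : π' 0 = π 0 := by
    by_cases h : 0 < m1
    · exact hval' 0 h
    · have hm0 : m1 = 0 := by omega
      rw [hval 0 (by omega), hm0]
      simp
  refine ⟨π', hplay', hcons', h0, ?_, ?_⟩
  · intro n hn
    refine ⟨(n - m1) % c0, ?_, hval n hn⟩
    have := Nat.mod_lt (n - m1) hc0pos
    omega
  · intro r hrm N
    refine ⟨m1 + r + N * c0, ?_, ?_⟩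
    · have : N ≤ N * c0 := Nat.le_mul_of_pos_right N hc0pos
      omega
    · have hv : π' (m1 + r + N * c0) = π (m1 + (m1 + r + N * c0 - m1) % c0) :=
        hval _ (by omega)
      have harith : m1 + r + N * c0 - m1 = r + N * c0 := by omega
      rw [hv, harith, Nat.add_mul_mod_self_right, Nat.mod_eq_of_lt (by omega)]

theorem hist_succ (π : ℕ → V) (n : ℕ) : hist π (n + 1) = hist π n ++ [π n] := by
  unfold hist
  rw [List.ofFn_succ']
  simp [List.concat_eq_append]

theorem degree_consPlay (v : V) (π : ℕ → V) (j l : ℕ) :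
    G.degree (consPlay v π) j (l + 1) =
      G.degree π j l + (if G.prio v = j then 1 else 0) := by
  unfold degree
  have hset : (Finset.range (l + 1 + 1)).filter (fun m => G.prio (consPlay v π m) = j) =
      ((Finset.range (l + 1)).filter (fun m => G.prio (π m) = j)).image (· + 1) ∪
        (Finset.range 1).filter (fun m => G.prio (consPlay v π m) = j) := by
    ext m
    simp only [Finset.mem_filter, Finset.mem_range, Finset.mem_union, Finset.mem_image]
    cases m with
    | zero =>
      constructor
      · intro h
        exact Or.inr ⟨by omega, h.2⟩
      · rintro (⟨m', _, hm'⟩ | h)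
        · omega
        · exact ⟨by omega, h.2⟩
    | succ m =>
      constructor
      · intro h
        exact Or.inl ⟨m, ⟨by omega, h.2⟩, rfl⟩
      · rintro (⟨m', ⟨hm1, hm2⟩, hm'⟩ | h)
        · have : m' = m := by omega
          subst this
          exact ⟨by omega, hm2⟩
        · omega
  rw [hset, Finset.card_union_of_disjoint, Finset.card_image_of_injective _
      (fun a b h => by omega)]
  · congr 1
    rw [Finset.range_one]
    by_cases h : G.prio v = j
    · rw [Finset.filter_singleton, if_pos (by exact h), if_pos h]
      rfl
    · rw [Finset.filter_singleton, if_neg (by exact h), if_neg h]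
      rfl
  · rw [Finset.disjoint_left]
    intro a ha hb
    simp only [Finset.mem_image, Finset.mem_filter, Finset.mem_range] at ha hb
    obtain ⟨m', _, hm'⟩ := ha
    omega

theorem degree_zero (π : ℕ → V) (j : ℕ) :
    G.degree π j 0 = if G.prio (π 0) = j then 1 else 0 := by
  unfold degree
  rw [Finset.range_one]
  by_cases h : G.prio (π 0) = j
  · rw [Finset.filter_singleton, if_pos (by exact h), if_pos h]
    rfl
  · rw [Finset.filter_singleton, if_neg (by exact h), if_neg h]
    rfl

/-- Every vertex in Even's history-strategy winning region is in the positional region. -/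
theorem winRegion_subset_W (D : G.Determinacy Set.univ) :
    G.WinRegion true ⊆ D.W true := by
  intro v hv
  rcases D.cover (Set.mem_univ v) with h | h
  · exact h
  exfalso
  obtain ⟨σh, hσval, hσwin⟩ := hv
  set step : V × List V → V × List V := fun x =>
    (if G.ownerEven x.1 = true then σh x.2 x.1 else D.σ false x.1, x.2 ++ [x.1]) with hstepdef
  set f : ℕ → V × List V := fun n => step^[n] (v, []) with hfdef
  set π : ℕ → V := fun n => (f n).1 with hπdef
  have hf_succ : ∀ n, f (n + 1) = step (f n) := by
    intro n
    simp only [hfdef]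
    exact Function.iterate_succ_apply' _ _ _
  have hπ0 : π 0 = v := rfl
  have hhist : ∀ n, (f n).2 = hist π n := by
    intro n
    induction n with
    | zero =>
      show ([] : List V) = hist π 0
      unfold hist
      simp
    | succ n ih =>
      rw [hf_succ]
      show (f n).2 ++ [(f n).1] = hist π (n + 1)
      rw [ih, hist_succ π n]
  have hπsucc : ∀ n, π (n + 1) =
      (if G.ownerEven (π n) = true then σh (hist π n) (π n) else D.σ false (π n)) := by
    intro n
    show (f (n + 1)).1 = _
    rw [hf_succ]
    show (if G.ownerEven (f n).1 = true then σh (f n).2 (f n).1 else D.σ false (f n).1) = _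
    rw [hhist n]
  have hplay : G.IsPlay π := by
    intro n
    rw [hπsucc n]
    by_cases ho : G.ownerEven (π n) = true
    · rw [if_pos ho]
      exact hσval (hist π n) (π n) ho
    · rw [if_neg ho]
      exact (D.valid false (π n) trivial (Bool.eq_false_iff.mpr ho)).1
  have hconsH : G.ConsH true σh π := by
    intro n ho
    rw [hπsucc n, if_pos ho]
  have hconsP : G.ConsP false (D.σ false) π := by
    intro n ho
    rw [hπsucc n, if_neg (by rw [ho]; simp)]
  have hw1 : G.WonBy true π := hσwin π hplay hπ0 hconsH
  have hw2 : G.WonBy false π := D.wins false v h π hplay (fun _ => trivial) hπ0 hconsP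
  exact G.not_wonBy_both hw1 hw2

end ParityGame
namespace ParityGame

set_option linter.unusedSectionVars false
set_option maxHeartbeats 2000000

variable {V : Type*} [Fintype V] [DecidableEq V] (G : ParityGame V)

theorem exists_gpm :
    ∃ ρ : V → G.Meas, G.IsGPM ρ ∧ ∀ v ∈ G.WinRegion true, ρ v ≠ ⊤ := by
  classical
  have hadm : G.Adm Set.univ := by
    intro v _
    obtain ⟨w, hw⟩ := G.total v
    exact ⟨w, hw, trivial⟩
  obtain ⟨D⟩ := G.determinacy Set.univ.ncard Set.univ rfl hadm
  set τ := D.σ true with hτdef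
  set WE := D.W true with hWEdef
  have hwinsWE : ∀ v ∈ WE, ∀ π, G.IsPlay π → π 0 = v → G.ConsP true τ π →
      G.WonByEven π := by
    intro v hv π h1 h2 h3
    have hw := D.wins true v hv π h1 (fun _ => trivial) h2 h3
    simpa [WonBy] using hw
  have hWEown : ∀ u ∈ WE, G.ownerEven u = true → G.E u (τ u) ∧ τ u ∈ WE := by
    intro u hu ho
    exact ⟨(D.valid true u trivial ho).1, (D.valid true u trivial ho).2.2 hu⟩
  have hWEopp : ∀ u ∈ WE, G.ownerEven u = false → ∀ w, G.E u w → w ∈ WE := by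
    intro u hu ho w hE
    exact G.opp_closed D hu (by rw [ho]; simp) hE trivial
  -- canonical plays
  choose fb hfb using G.total
  set nxt : V → V := fun u => if G.ownerEven u = true then τ u else fb u with hnxtdef
  have hnxtE : ∀ u, G.E u (nxt u) := by
    intro u
    by_cases ho : G.ownerEven u = true
    · simp only [hnxtdef, if_pos ho]
      exact (D.valid true u trivial ho).1
    · simp only [hnxtdef, if_neg ho]
      exact hfb u
  set can : V → ℕ → V := fun u n => nxt^[n] u with hcandef
  have hcan0 : ∀ u, can u 0 = u := fun u => rfl
  have hcansucc : ∀ u n, can u (n + 1) = nxt (can u n) := by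
    intro u n
    simp only [hcandef]
    exact Function.iterate_succ_apply' _ _ _
  have hcanPlay : ∀ u, G.IsPlay (can u) := by
    intro u n
    rw [hcansucc]
    exact hnxtE _
  have hcanCons : ∀ u, G.ConsP true τ (can u) := by
    intro u n ho
    rw [hcansucc]
    simp only [hnxtdef, if_pos ho]
  -- degree sets
  set DS : V → ℕ → Set ℕ := fun v j =>
    {c | ∃ π, G.IsPlay π ∧ π 0 = v ∧ G.ConsP true τ π ∧
      ∃ l, G.domStretchPrefix π j l ∧ c = G.degree π j l} with hDSdef
  -- the pumping bound
  have hbound : ∀ v ∈ WE, ∀ j, ¬ Even j → ∀ c ∈ DS v j, c ≤ G.nP j := by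
    intro v hv j hodd c hc
    obtain ⟨π, hplay, h0, hcons, l, hdom, hdeg⟩ := hc
    by_contra hgt
    push_neg at hgt
    have hmaps : ∀ m ∈ (Finset.range (l + 1)).filter (fun m => G.prio (π m) = j),
        π m ∈ Finset.univ.filter (fun u => G.prio u = j) := by
      intro m hm
      exact Finset.mem_filter.mpr ⟨Finset.mem_univ _, (Finset.mem_filter.mp hm).2⟩
    have hcard : (Finset.univ.filter (fun u => G.prio u = j)).card <
        ((Finset.range (l + 1)).filter (fun m => G.prio (π m) = j)).card := by
      have h1 : G.nP j = (Finset.univ.filter (fun u => G.prio u = j)).card := rfl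
      unfold degree at hdeg
      omega
    obtain ⟨a, ha, b, hb, hab, heqv⟩ :=
      Finset.exists_ne_map_eq_of_card_lt_of_maps_to hcard hmaps
    have key : ∀ a b : ℕ, a < b →
        a ∈ (Finset.range (l + 1)).filter (fun m => G.prio (π m) = j) →
        b ∈ (Finset.range (l + 1)).filter (fun m => G.prio (π m) = j) →
        π a = π b → False := by
      intro a b haltb ha hb heqv
      obtain ⟨hal, haj⟩ := Finset.mem_filter.mp ha
      obtain ⟨hbl, _⟩ := Finset.mem_filter.mp hb
      rw [Finset.mem_range] at hal hbl
      obtain ⟨π', hplay', hcons', h0', hseg, hinf⟩ := G.pump hplay hcons haltb heqv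
      have hwon : G.WonByEven π' := hwinsWE v hv π' hplay' (by rw [h0', h0]) hcons'
      have hjmem : G.InfOft π' j := by
        have hh := hinf 0 (by omega)
        rwa [Nat.add_zero, haj] at hh
      have hjmem' : j ∈ {q | G.InfOft π' q} := hjmem
      have hsinf : sInf {q | G.InfOft π' q} = j := by
        apply le_antisymm (Nat.sInf_le hjmem')
        apply le_csInf ⟨j, hjmem'⟩
        intro q hq
        obtain ⟨n0, hn0, hq0⟩ := hq a
        obtain ⟨r, hr, hvalr⟩ := hseg n0 hn0
        rw [← hq0, hvalr]
        exact hdom.1 (a + r) (by omega)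
      unfold WonByEven at hwon
      rw [hsinf] at hwon
      exact hodd hwon
    rcases Nat.lt_trichotomy a b with h | h | h
    · exact key a b h ha hb heqv
    · exact hab h
    · exact key b a h hb ha heqv.symm
  -- membership lemmas for DS
  have hDle : ∀ v w, G.E v w → (G.ownerEven v = true → w = τ v) → ∀ j, j ≤ G.prio v →
      ∀ c, c ∈ DS w j → c + (if G.prio v = j then 1 else 0) ∈ DS v j := by
    intro v w hE hw0 j hj c hc
    obtain ⟨π', hplay', h0', hcons', l, hdom, hdeg⟩ := hc
    refine ⟨consPlay v π', G.isPlay_consPlay (by rw [h0']; exact hE) hplay', rfl,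
      G.consP_consPlay (fun ho => by rw [h0']; exact hw0 ho) hcons', l + 1, ⟨?_, ?_⟩, ?_⟩
    · intro m hm
      cases m with
      | zero => exact hj
      | succ m => exact hdom.1 m (by omega)
    · obtain ⟨m, hm, hmp⟩ := hdom.2
      exact ⟨m + 1, by omega, hmp⟩
    · rw [G.degree_consPlay v π' j l, hdeg]
  have hDone : ∀ v, ∀ j, G.prio v = j → (1 : ℕ) ∈ DS v j := by
    intro v j hpv
    refine ⟨can v, hcanPlay v, hcan0 v, hcanCons v, 0, ⟨?_, ⟨0, le_refl 0, ?_⟩⟩, ?_⟩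
    · intro m hm
      have hm0 : m = 0 := by omega
      subst hm0
      rw [hcan0, hpv]
    · rw [hcan0]
      exact hpv
    · rw [G.degree_zero, hcan0, if_pos hpv]
  -- the measure
  set F : V → Fin G.d → ℕ :=
    fun v jf => if Even (jf : ℕ) then 0 else sSup (DS v (jf : ℕ)) with hFdef
  set ρ : V → G.Meas := fun v =>
    if v ∈ WE then ((toLex (F v) : Lex (Fin G.d → ℕ)) : G.Meas) else ⊤ with hρdef
  have hbddF : ∀ v ∈ WE, ∀ j, ¬ Even j → BddAbove (DS v j) := by
    intro v hv j hodd
    exact ⟨G.nP j, fun c hc => hbound v hv j hodd c hc⟩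
  have hFbound : ∀ v ∈ WE, ∀ jf : Fin G.d, ¬ Even (jf : ℕ) → F v jf ≤ G.nP (jf : ℕ) := by
    intro v hv jf hodd
    simp only [hFdef, if_neg hodd]
    by_cases hne : (DS v (jf : ℕ)).Nonempty
    · exact csSup_le hne (fun c hc => hbound v hv _ hodd c hc)
    · rw [Set.not_nonempty_iff_eq_empty.mp hne, csSup_empty]
      exact bot_le
  have hMeas : G.IsMeasure ρ := by
    intro v
    by_cases hv : v ∈ WE
    · right
      refine ⟨F v, by simp only [hρdef, if_pos hv], fun jf => ⟨fun he => ?_, fun ho => ?_⟩⟩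
      · simp only [hFdef, if_pos he]
      · exact hFbound v hv jf ho
    · left
      simp only [hρdef, if_neg hv]
  -- core comparison
  have hcomp : ∀ v ∈ WE, ∀ w ∈ WE, G.E v w → (G.ownerEven v = true → w = τ v) →
      G.progCond ρ v w (ρ v) := by
    intro v hv w hw hE hw0
    have hρv : ρ v = ((toLex (F v) : Lex (Fin G.d → ℕ)) : G.Meas) := by
      simp only [hρdef, if_pos hv]
    have hρw : ρ w = ((toLex (F w) : Lex (Fin G.d → ℕ)) : G.Meas) := by
      simp only [hρdef, if_pos hw]
    set p := G.prio v with hpv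
    have hle : ∀ jf : Fin G.d, (jf : ℕ) ≤ p → ¬ Even (jf : ℕ) → (jf : ℕ) ≠ p →
        F w jf ≤ F v jf := by
      intro jf hjp hodd hjne
      simp only [hFdef, if_neg hodd]
      by_cases hne : (DS w (jf : ℕ)).Nonempty
      · apply csSup_le hne
        intro c hc
        have hmem := hDle v w hE hw0 (jf : ℕ) hjp c hc
        rw [if_neg (fun h => hjne h.symm), Nat.add_zero] at hmem
        exact le_csSup (hbddF v hv _ hodd) hmem
      · rw [Set.not_nonempty_iff_eq_empty.mp hne, csSup_empty]
        exact bot_le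
    have hlt : ¬ Even p → ∀ jf : Fin G.d, (jf : ℕ) = p → F w jf + 1 ≤ F v jf := by
      intro hodd jf hjp
      have hoddj : ¬ Even (jf : ℕ) := by rw [hjp]; exact hodd
      simp only [hFdef, if_neg hoddj]
      by_cases hne : (DS w (jf : ℕ)).Nonempty
      · have hmem := Nat.sSup_mem hne (hbddF w hw _ hoddj)
        have h2 := hDle v w hE hw0 (jf : ℕ) hjp.le _ hmem
        rw [if_pos (by rw [hjp])] at h2
        exact le_csSup (hbddF v hv _ hoddj) h2
      · rw [Set.not_nonempty_iff_eq_empty.mp hne, csSup_empty]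
        have h1 : (1 : ℕ) ∈ DS v (jf : ℕ) := hDone v _ (by rw [hjp])
        have h2 := le_csSup (hbddF v hv _ hoddj) h1
        rw [Nat.bot_eq_zero]
        omega
    have htrv : G.trunc p (ρ v) =
        ((toLex (fun jf : Fin G.d => if (jf : ℕ) ≤ p then F v jf else 0) :
          Lex (Fin G.d → ℕ)) : G.Meas) := by
      rw [hρv, G.trunc_coe]
      rfl
    have htrw : G.trunc p (ρ w) =
        ((toLex (fun jf : Fin G.d => if (jf : ℕ) ≤ p then F w jf else 0) :
          Lex (Fin G.d → ℕ)) : G.Meas) := by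
      rw [hρw, G.trunc_coe]
      rfl
    unfold progCond
    by_cases hp : Even p
    · rw [if_pos hp]
      show G.trunc p (ρ w) ≤ G.trunc p (ρ v)
      rw [htrv, htrw, WithTop.coe_le_coe]
      apply Pi.toLex_monotone
      intro jf
      beta_reduce
      by_cases hjp : (jf : ℕ) ≤ p
      · rw [if_pos hjp, if_pos hjp]
        by_cases hev : Even (jf : ℕ)
        · simp only [hFdef, if_pos hev]
          exact le_refl 0
        · have hjne : (jf : ℕ) ≠ p := fun h => hev (h ▸ hp)
          exact hle jf hjp hev hjne
      · rw [if_neg hjp, if_neg hjp]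
    · rw [if_neg hp]
      left
      show G.trunc p (ρ w) < G.trunc p (ρ v)
      rw [htrv, htrw, WithTop.coe_lt_coe]
      have hpd : p < G.d := G.prio_lt_d v
      apply lex_lt_of_le_of_lt (i := ⟨p, hpd⟩)
      · intro jf
        beta_reduce
        by_cases hjp : (jf : ℕ) ≤ p
        · rw [if_pos hjp, if_pos hjp]
          by_cases hev : Even (jf : ℕ)
          · simp only [hFdef, if_pos hev]
            exact le_refl 0
          · by_cases hjne : (jf : ℕ) = p
            · have := hlt hp jf hjne
              omega
            · exact hle jf hjp hev hjne
        · rw [if_neg hjp, if_neg hjp]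
      · have hc : ((⟨p, hpd⟩ : Fin G.d) : ℕ) = p := rfl
        beta_reduce
        rw [if_pos (le_of_eq hc), if_pos (le_of_eq hc)]
        have := hlt hp ⟨p, hpd⟩ hc
        omega
  have hGPM : G.IsGPM ρ := by
    refine ⟨hMeas, fun v => ⟨?_, ?_⟩⟩
    · intro ho
      by_cases hv : v ∈ WE
      · obtain ⟨hEτ, hτWE⟩ := hWEown v hv ho
        refine ⟨τ v, hEτ, ?_⟩
        have hPC := hcomp v hv (τ v) hτWE hEτ (fun _ => rfl)
        exact G.geAt_of_le (G.prog_le (hMeas v) hPC)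
      · obtain ⟨w, hw⟩ := G.total v
        refine ⟨w, hw, ?_⟩
        have hvt : ρ v = ⊤ := by simp only [hρdef, if_neg hv]
        rw [hvt]
        exact G.geAt_top
    · intro ho w hE
      by_cases hv : v ∈ WE
      · have hwWE : w ∈ WE := hWEopp v hv ho w hE
        have hPC := hcomp v hv w hwWE hE
          (fun h => by rw [h] at ho; exact absurd ho (by simp))
        exact G.geAt_of_le (G.prog_le (hMeas v) hPC)
      · have hvt : ρ v = ⊤ := by simp only [hρdef, if_neg hv]
        rw [hvt]
        exact G.geAt_top
  refine ⟨ρ, hGPM, ?_⟩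
  intro v hvwin
  have hvWE : v ∈ WE := G.winRegion_subset_W D hvwin
  simp only [hρdef, if_pos hvWE]
  exact WithTop.coe_ne_top

end ParityGame

/-- the least game parity progress measure characterises the winning
region of player Even: `ρ̄(v) ≠ ⊤` iff Even wins from `v`. -/
theorem least_progress_measure_characterizes_winning_region
    {V : Type*} [Fintype V] [DecidableEq V] (G : ParityGame V)
    (ρbar : V → G.Meas) (hgpm : G.IsGPM ρbar)
    (hleast : ∀ ρ : V → G.Meas, G.IsGPM ρ → ∀ v, ρbar v ≤ ρ v) :
    ∀ v : V, ρbar v ≠ ⊤ ↔ v ∈ G.WinRegion true := by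
  intro v
  constructor
  · intro hne
    exact G.mem_winRegion_of_gpm hgpm hne
  · intro hwin htop
    obtain ⟨ρ, hρ1, hρ2⟩ := G.exists_gpm
    have hle := hleast ρ hρ1 v
    rw [htop] at hle
    exact hρ2 v hwin (top_le_iff.mp hle)

end
end

section
/- Let G be a parity game and let ρ be any game parity progress measure of G. Define a positional strategy σ for player Even by choosing, for each v ∈ V_Even with ρ(v) ≠ ⊤, some successor w ∈ post(v) with ρ(v) ≥_{P(v)} Prog(ρ,v,w). Then σ is a winning strategy for Even from every vertex v with ρ(v) ≠ ⊤; in particular, every vertex v with ρ(v) ≠ ⊤ belongs to W_Even(G). -/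
open Classical

noncomputable section

open ParityGame

set_option linter.unusedSectionVars false

section AuxPM

variable {V : Type*} [Fintype V] [DecidableEq V] (G : ParityGame V)

lemma PM.trunc_top (k : ℕ) : G.trunc k (⊤ : G.Meas) = ⊤ := rfl

lemma PM.trunc_coe (k : ℕ) (f : Lex (Fin G.d → ℕ)) :
    G.trunc k (f : G.Meas) =
      ((toLex (fun j : Fin G.d => if (j : ℕ) ≤ k then ofLex f j else 0) : Lex (Fin G.d → ℕ)) :
        G.Meas) := rfl

lemma PM.trunc_eq_top_iff {k : ℕ} {m : G.Meas} : G.trunc k m = ⊤ ↔ m = ⊤ := by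
  induction m using WithTop.recTopCoe with
  | top => simp [PM.trunc_top]
  | coe f => simp [PM.trunc_coe]

lemma PM.lexlt {n : ℕ} {f g : Lex (Fin n → ℕ)} :
    f < g ↔ ∃ i : Fin n, (∀ j, j < i → ofLex f j = ofLex g j) ∧ ofLex f i < ofLex g i :=
  Iff.rfl

lemma PM.trunc_lt_of_trunc_lt {p k : ℕ} (hpk : p ≤ k) {a b : G.Meas}
    (h : G.trunc p a < G.trunc p b) : G.trunc k a < G.trunc k b := by
  induction b using WithTop.recTopCoe with
  | top =>
    induction a using WithTop.recTopCoe with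
    | top => simp at h
    | coe f =>
      rw [PM.trunc_top, PM.trunc_coe]
      exact WithTop.coe_lt_top _
  | coe g =>
    induction a using WithTop.recTopCoe with
    | top => rw [PM.trunc_top] at h; exact absurd h (not_top_lt)
    | coe f =>
      rw [PM.trunc_coe, PM.trunc_coe] at h ⊢
      rw [WithTop.coe_lt_coe] at h ⊢
      obtain ⟨i, hji, hi⟩ := PM.lexlt.1 h
      simp only [Pi.toLex_apply, Pi.ofLex_apply, ofLex_toLex] at hji hi
      have hip : (i : ℕ) ≤ p := by
        by_contra hip
        simp [hip] at hi
      refine PM.lexlt.2 ⟨i, fun j hj => ?_, ?_⟩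
      · have hjp : (j : ℕ) ≤ p := le_trans (le_of_lt hj) hip
        have := hji j hj
        simp only [Pi.toLex_apply, Pi.ofLex_apply, ofLex_toLex]
        simp only [if_pos hjp] at this
        simp [if_pos (le_trans hjp hpk), this]
      · simp only [Pi.toLex_apply, Pi.ofLex_apply, ofLex_toLex]
        simp only [if_pos hip] at hi
        simpa [if_pos (le_trans hip hpk)] using hi

lemma PM.trunc_le_of_trunc_le {p k : ℕ} (hpk : p ≤ k) {a b : G.Meas}
    (h : G.trunc k a ≤ G.trunc k b) : G.trunc p a ≤ G.trunc p b := by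
  by_contra hc
  exact absurd h (not_le_of_gt (PM.trunc_lt_of_trunc_lt G hpk (lt_of_not_ge hc)))

lemma PM.ne_top_aux {k : ℕ} {a b : G.Meas} (h : G.trunc k a ≤ G.trunc k b) (hb : b ≠ ⊤) :
    a ≠ ⊤ := by
  intro ha
  subst ha
  rw [PM.trunc_top, top_le_iff, PM.trunc_eq_top_iff] at h
  exact hb h

/-- Step lemma along a consistent play. -/
lemma PM.step (ρ : V → G.Meas) (hgpm : G.IsGPM ρ) (σ : V → V)
    (hσ : ∀ v, G.ownerEven v = true → ρ v ≠ ⊤ →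
      G.E v (σ v) ∧ G.geAt (G.prio v) (ρ v) (G.Prog ρ v (σ v)))
    {v w : V} (he : G.E v w) (hv : ρ v ≠ ⊤) (hw : G.ownerEven v = true → w = σ v) :
    ρ w ≠ ⊤ ∧ G.geAt (G.prio v) (ρ v) (ρ w) ∧
      (¬ Even (G.prio v) → G.gtAt (G.prio v) (ρ v) (ρ w)) := by
  have hge : G.geAt (G.prio v) (ρ v) (G.Prog ρ v w) := by
    cases ho : G.ownerEven v with
    | false => exact ((hgpm.2 v).2 ho) w he
    | true => rw [hw ho]; exact (hσ v ho hv).2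
  have hProgne : G.Prog ρ v w ≠ ⊤ := by
    intro hPt
    rw [hPt] at hge
    unfold ParityGame.geAt at hge
    rw [PM.trunc_top, top_le_iff, PM.trunc_eq_top_iff] at hge
    exact hv hge
  have hL : ∃ m, IsLeast {m | G.inMEven m ∧ G.progCond ρ v w m} m := by
    by_contra hL
    exact hProgne (by simp [ParityGame.Prog, hL])
  have hPdef : G.Prog ρ v w = hL.choose := by simp [ParityGame.Prog, hL]
  have hcond : G.progCond ρ v w (G.Prog ρ v w) := by
    rw [hPdef]; exact hL.choose_spec.1.2
  unfold ParityGame.progCond at hcond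
  simp only [ParityGame.geAt, ParityGame.gtAt] at hge ⊢
  by_cases hpar : Even (G.prio v)
  · rw [if_pos hpar] at hcond
    unfold ParityGame.geAt at hcond
    have h1 : G.trunc (G.prio v) (ρ w) ≤ G.trunc (G.prio v) (ρ v) := le_trans hcond hge
    exact ⟨PM.ne_top_aux G h1 hv, h1, fun h => absurd hpar h⟩
  · rw [if_neg hpar] at hcond
    rcases hcond with hcond | hcond
    · unfold ParityGame.gtAt at hcond
      have h1 : G.trunc (G.prio v) (ρ w) < G.trunc (G.prio v) (ρ v) := lt_of_lt_of_le hcond hge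
      exact ⟨PM.ne_top_aux G (le_of_lt h1) hv, le_of_lt h1, fun _ => h1⟩
    · exact absurd hcond.1 hProgne

/-- Any play consistent with `σ` from a non-top vertex is won by Even. -/
lemma PM.play_won (ρ : V → G.Meas) (hgpm : G.IsGPM ρ) (σ : V → V)
    (hσ : ∀ v, G.ownerEven v = true → ρ v ≠ ⊤ →
      G.E v (σ v) ∧ G.geAt (G.prio v) (ρ v) (G.Prog ρ v (σ v)))
    (π : ℕ → V) (hplay : G.IsPlay π)
    (hcons : ∀ n, G.ownerEven (π n) = true → ρ (π n) ≠ ⊤ → π (n + 1) = σ (π n))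
    (h0 : ρ (π 0) ≠ ⊤) : G.WonByEven π := by
  -- measures along the play never become top, and decrease appropriately
  have hne : ∀ n, ρ (π n) ≠ ⊤ := by
    intro n
    induction n with
    | zero => exact h0
    | succ n ih =>
      exact (PM.step G ρ hgpm σ hσ (hplay n) ih (fun ho => hcons n ho ih)).1
  have hstep : ∀ n, G.geAt (G.prio (π n)) (ρ (π n)) (ρ (π (n + 1))) ∧
      (¬ Even (G.prio (π n)) → G.gtAt (G.prio (π n)) (ρ (π n)) (ρ (π (n + 1)))) := by
    intro n
    have := PM.step G ρ hgpm σ hσ (hplay n) (hne n) (fun ho => hcons n ho (hne n))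
    exact ⟨this.2.1, this.2.2⟩
  -- the set of infinitely often occurring priorities is nonempty
  have hSne : ∃ q, G.InfOft π q := by
    obtain ⟨u, hu⟩ := Finite.exists_infinite_fiber π
    refine ⟨G.prio u, fun N => ?_⟩
    obtain ⟨m, hm, hmN⟩ := (Set.infinite_coe_iff.1 hu).exists_gt N
    exact ⟨m, le_of_lt hmN, by simp only [Set.mem_preimage, Set.mem_singleton_iff] at hm; rw [hm]⟩
  set p := sInf {q | G.InfOft π q} with hpdef
  have hp : G.InfOft π p := Nat.sInf_mem hSne
  rw [ParityGame.WonByEven]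
  by_contra hodd
  -- eventually all priorities are ≥ p
  have hbound : ∀ k, k ≤ p → ∃ N, ∀ n, N ≤ n → k ≤ G.prio (π n) := by
    intro k
    induction k with
    | zero => exact fun _ => ⟨0, fun n _ => Nat.zero_le _⟩
    | succ k ih =>
      intro hk
      obtain ⟨N1, hN1⟩ := ih (le_trans (Nat.le_succ k) hk)
      have hknot : ¬ G.InfOft π k := Nat.notMem_of_lt_sInf (Nat.lt_of_succ_le hk)
      rw [ParityGame.InfOft] at hknot
      push_neg at hknot
      obtain ⟨N2, hN2⟩ := hknot
      refine ⟨max N1 (N2 + 1), fun n hn => ?_⟩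
      have h1 := hN1 n (le_trans (le_max_left _ _) hn)
      have h2 := hN2 n (le_trans (Nat.le_succ _) (le_trans (le_max_right _ _) hn))
      exact Nat.succ_le_of_lt (lt_of_le_of_ne h1 (Ne.symm h2))
  obtain ⟨N, hN⟩ := hbound p le_rfl
  set D : ℕ → G.Meas := fun n => G.trunc p (ρ (π n)) with hDdef
  have hmono : ∀ n, N ≤ n → D (n + 1) ≤ D n := by
    intro n hn
    exact PM.trunc_le_of_trunc_le G (hN n hn) (hstep n).1
  have hanti : ∀ m n, N ≤ m → m ≤ n → D n ≤ D m := by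
    intro m n hm hmn
    induction n, hmn using Nat.le_induction with
    | base => exact le_rfl
    | succ n hmn ih => exact le_trans (hmono n (le_trans hm hmn)) ih
  obtain ⟨x, ⟨n0, hn0, rfl⟩, hmin⟩ :=
    (wellFounded_lt (α := G.Meas)).has_min (D '' {n | N ≤ n}) ⟨D N, N, Set.mem_ofPred.2 le_rfl, rfl⟩
  obtain ⟨n, hn, hpn⟩ := hp (max n0 N)
  have hstrict : D (n + 1) < D n := by
    have := (hstep n).2 (by rw [hpn]; exact hodd)
    unfold ParityGame.gtAt at this
    rw [hpn] at this
    exact this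
  have hle : D n ≤ D n0 := hanti n0 n hn0 (le_trans (le_max_left _ _) hn)
  exact hmin (D (n + 1))
    ⟨n + 1, Set.mem_ofPred.2 (le_trans (le_trans (le_max_right _ _) hn) (Nat.le_succ n)), rfl⟩
    (lt_of_lt_of_le hstrict hle)

end AuxPM


/-- from any game parity progress measure `ρ`, a positional strategy for
Even chosen so that `ρ(v) ≥_{P(v)} Prog(ρ, v, σ(v))` on non-`⊤` Even vertices is
winning for Even from every vertex with non-`⊤` measure. -/
theorem progress_measure_yields_even_winning_strategy
    {V : Type*} [Fintype V] [DecidableEq V] (G : ParityGame V)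
    (ρ : V → G.Meas) (hgpm : G.IsGPM ρ) (σ : V → V)
    (hσ : ∀ v, G.ownerEven v = true → ρ v ≠ ⊤ →
      G.E v (σ v) ∧ G.geAt (G.prio v) (ρ v) (G.Prog ρ v (σ v))) :
    ∀ v : V, ρ v ≠ ⊤ →
      (∀ π : ℕ → V, G.IsPlay π → π 0 = v →
        (∀ n, G.ownerEven (π n) = true → ρ (π n) ≠ ⊤ → π (n + 1) = σ (π n)) →
        G.WonByEven π) ∧
      v ∈ G.WinRegion true := by
  intro v hv
  have main := PM.play_won G ρ hgpm σ hσ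
  refine ⟨fun π hπ h0 hcons => main π hπ hcons (by rw [h0]; exact hv), ?_⟩
  refine ⟨fun _ u => if G.ownerEven u = true ∧ ρ u ≠ ⊤ then σ u else (G.total u).choose,
    ?_, ?_⟩
  · intro h u hu
    by_cases hc : G.ownerEven u = true ∧ ρ u ≠ ⊤
    · simp only [if_pos hc]; exact (hσ u hc.1 hc.2).1
    · simp only [if_neg hc]; exact (G.total u).choose_spec
  · intro π hπ h0 hcH
    have hcons : ∀ n, G.ownerEven (π n) = true → ρ (π n) ≠ ⊤ → π (n + 1) = σ (π n) := by
      intro n ho hne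
      rw [hcH n ho]
      show (if G.ownerEven (π n) = true ∧ ρ (π n) ≠ ⊤ then σ (π n)
        else (G.total (π n)).choose) = σ (π n)
      rw [if_pos ⟨ho, hne⟩]
    have := main π hπ hcons (by rw [h0]; exact hv)
    simpa [ParityGame.WonBy] using this

end
end
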